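/- arXiv:2004.12093 — 5 statements merged into one kernel-verified Lean document; each statement's English description precedes it below -/
import Mathlib

section
/- Let m, n be positive integers and let w be a word in B_{m,n}. Then w is primitive: for every j with 1 ≤ j ≤ (m+1)n − 1, the j-th cyclic rotation rot^j(w) is not equal to w. -/
lemma per_add_mul {α : Type*} {v : ℕ → α} {a : ℕ} (ha : ∀ i, v (i + a) = v i) :
    ∀ q i, v (i + q * a) = v i := by
  intro q
  induction q with
  | zero => simp
  | succ q ih =>
    intro i
    rw [Nat.succ_mul, ← Nat.add_assoc, ha, ih]

lemma per_gcd {α : Type*} {v : ℕ → α} : ∀ a b : ℕ, (∀ i, v (i + a) = v i) →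
    (∀ i, v (i + b) = v i) → ∀ i, v (i + Nat.gcd a b) = v i := by
  intro a
  induction a using Nat.strong_induction_on with
  | _ a IH =>
    intro b ha hb i
    rcases Nat.eq_zero_or_pos a with rfl | hp
    · simpa using hb i
    · rw [Nat.gcd_rec]
      refine IH (b % a) (Nat.mod_lt _ hp) a ?_ ha i
      intro i'
      have h1 : v (i' + b % a + b / a * a) = v (i' + b % a) := per_add_mul ha _ _
      have h2 : i' + b % a + b / a * a = i' + b := by
        rw [Nat.add_assoc, Nat.add_comm (b % a), Nat.mul_comm, Nat.div_add_mod]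
      rw [← h1, h2, hb]

lemma sum_blocks {M : Type*} [AddCommMonoid M] (f : ℕ → M) (t g : ℕ) :
    ∑ i ∈ Finset.range (t * g), f i
      = ∑ b ∈ Finset.range t, ∑ r ∈ Finset.range g, f (b * g + r) := by
  induction t with
  | zero => simp
  | succ t ih =>
    rw [Nat.succ_mul, Finset.sum_range_add, ih, Finset.sum_range_succ]



/-- The `j`-th cyclic rotation of a word `w` of length `k`:
`(rot j w)ᵢ = w_{i+j mod k}` (0-indexed), so `rot 1` sends `w₁w₂⋯w_k` to `w₂⋯w_k w₁`. -/
def rot {k : ℕ} (j : ℕ) (w : Fin k → Bool) : Fin k → Bool :=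
  fun i => w ⟨((i : ℕ) + j) % k, Nat.mod_lt _ i.pos⟩

/-- The weight of a 0/1 word: the sum of the (1-indexed) positions of its ones. -/
def wordWeight {k : ℕ} (w : Fin k → Bool) : ℕ :=
  ∑ i : Fin k, if w i = true then (i : ℕ) + 1 else 0

/-- Membership in `B_{m,n}`: a 0/1 word of length `(m+1)n` which is `m`-balanced
(exactly `mn` ones and `n` zeros), starts with a zero, and has weight `≡ -1 (mod n)`. -/
def memB (m n : ℕ) (w : Fin ((m + 1) * n) → Bool) : Prop :=
  (Finset.univ.filter fun i => w i = true).card = m * n ∧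
  (Finset.univ.filter fun i => w i = false).card = n ∧
  (∀ i : Fin ((m + 1) * n), (i : ℕ) = 0 → w i = false) ∧
  ((wordWeight w : ZMod n) = -1)

/-- Every word in `B_{m,n}` is primitive: no proper cyclic rotation of it equals itself. -/
theorem every_word_in_B_is_primitive (m n : ℕ) (hm : 0 < m) (hn : 0 < n)
    (w : Fin ((m + 1) * n) → Bool) (hw : memB m n w) :
    ∀ j : ℕ, 1 ≤ j → j ≤ (m + 1) * n - 1 → rot j w ≠ w := by
  intro j hj1 hj2 hrot
  have hk : 0 < (m + 1) * n := Nat.mul_pos (Nat.succ_pos m) hn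
  -- the unfolded periodic word
  set v : ℕ → Bool := fun i => w ⟨i % ((m + 1) * n), Nat.mod_lt _ hk⟩ with hvdef
  have hvw : ∀ i : Fin ((m + 1) * n), w i = v (i : ℕ) := by
    intro i
    simp [hvdef, Nat.mod_eq_of_lt i.isLt]
  have hvj : ∀ i, v (i + j) = v i := by
    intro i
    have h := congrFun hrot ⟨i % ((m + 1) * n), Nat.mod_lt _ hk⟩
    simp only [rot] at h
    have hfin : (⟨(i + j) % ((m + 1) * n), Nat.mod_lt _ hk⟩ : Fin ((m + 1) * n))
        = ⟨(i % ((m + 1) * n) + j) % ((m + 1) * n), Nat.mod_lt _ hk⟩ :=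
      Fin.ext (by simp [Nat.mod_add_mod])
    simp only [hvdef]
    rw [hfin]
    exact h
  have hvk : ∀ i, v (i + (m + 1) * n) = v i := by
    intro i
    simp [hvdef, Nat.add_mod_right]
  set g := Nat.gcd j ((m + 1) * n) with hgdef
  have hg : ∀ i, v (i + g) = v i := per_gcd j ((m + 1) * n) hvj hvk
  have hgk : g ∣ (m + 1) * n := Nat.gcd_dvd_right j ((m + 1) * n)
  have hgpos : 0 < g := Nat.gcd_pos_of_pos_left ((m + 1) * n) hj1
  set t := (m + 1) * n / g with htdef
  have htg : t * g = (m + 1) * n := Nat.div_mul_cancel hgk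
  have htpos : 0 < t := Nat.div_pos (Nat.le_of_dvd hk hgk) hgpos
  have hper : ∀ b r : ℕ, v (b * g + r) = v r := by
    intro b r
    rw [Nat.add_comm]
    exact per_add_mul hg b r
  -- counting ones
  set c : ℕ → ℕ := fun i => if v i = true then 1 else 0 with hcdef
  set a := ∑ r ∈ Finset.range g, c r with hadef
  have hones : t * a = m * n := by
    have h1 := hw.1
    rw [Finset.card_filter] at h1
    have h2 : ∑ i : Fin ((m + 1) * n), (if w i = true then (1:ℕ) else 0) = t * a := by
      have e : ∀ i : Fin ((m + 1) * n), (if w i = true then (1:ℕ) else 0) = c (i : ℕ) := by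
        intro i; simp only [hcdef, hvw i]
      rw [Finset.sum_congr rfl fun i _ => e i, Fin.sum_univ_eq_sum_range c,
        show (m + 1) * n = t * g from htg.symm, sum_blocks]
      have e2 : ∀ b ∈ Finset.range t, ∑ r ∈ Finset.range g, c (b * g + r) = a := by
        intro b _
        refine Finset.sum_congr rfl fun r _ => ?_
        simp only [hcdef, hper b r]
      rw [Finset.sum_congr rfl e2, Finset.sum_const, Finset.card_range, smul_eq_mul]
    rw [← h2]
    exact h1
  -- t divides n
  have hta_le : t * a ≤ t * g := by
    rw [hones, htg]
    exact Nat.mul_le_mul_right n (by omega)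
  have hag : a ≤ g := Nat.le_of_mul_le_mul_left hta_le htpos
  set u := g - a with hudef
  have hgau : g = a + u := by omega
  have htu : t * u = n := by
    have h2 : t * a + t * u = m * n + n := by
      rw [← Nat.mul_add, ← hgau, htg]; ring
    rw [hones] at h2
    exact Nat.add_left_cancel h2
  -- weight decomposition
  set f : ℕ → ℕ := fun i => if v i = true then i + 1 else 0 with hfdef
  set w0 := ∑ r ∈ Finset.range g, f r with hw0def
  set T := ∑ b ∈ Finset.range t, b with hTdef
  have hT : T * 2 = t * (t - 1) := Finset.sum_range_id_mul_two t
  set S := a * g * T with hSdef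
  have hwt : wordWeight w = t * w0 + S := by
    unfold wordWeight
    have e : ∀ i : Fin ((m + 1) * n), (if w i = true then (i:ℕ) + 1 else 0) = f (i : ℕ) := by
      intro i; simp only [hfdef, hvw i]
    rw [Finset.sum_congr rfl fun i _ => e i, Fin.sum_univ_eq_sum_range f,
      show (m + 1) * n = t * g from htg.symm, sum_blocks]
    have hblock : ∀ b ∈ Finset.range t, ∑ r ∈ Finset.range g, f (b * g + r)
        = a * g * b + w0 := by
      intro b _
      have e3 : ∀ r ∈ Finset.range g, f (b * g + r) = c r * (b * g) + f r := by
        intro r _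
        simp only [hfdef, hcdef, hper b r]
        by_cases hv : v r = true <;> simp [hv] <;> ring
      rw [Finset.sum_congr rfl e3, Finset.sum_add_distrib, ← Finset.sum_mul, ← hadef,
        ← hw0def]
      ring
    rw [Finset.sum_congr rfl hblock, Finset.sum_add_distrib, Finset.sum_const,
      Finset.card_range, smul_eq_mul, ← Finset.mul_sum, ← hTdef, ← hSdef]
    ring
  -- n divides S
  obtain ⟨hh, hhh⟩ : Even (m * (m + 1)) := Nat.even_mul_succ_self m
  have hnS : n ∣ S := by
    have e1 : S * 2 * t = m * n * ((m + 1) * n) * (t - 1) := by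
      calc S * 2 * t = a * g * (T * 2) * t := by rw [hSdef]; ring
        _ = a * g * (t * (t - 1)) * t := by rw [hT]
        _ = t * a * (t * g) * (t - 1) := by ring
        _ = m * n * ((m + 1) * n) * (t - 1) := by rw [hones, htg]
    have e2 : m * n * ((m + 1) * n) * (t - 1) = hh * n * u * (t - 1) * 2 * t := by
      have e0 : m * n * ((m + 1) * n) * (t - 1) = (m * (m + 1)) * (n * n) * (t - 1) := by
        ring
      rw [e0, hhh, ← htu]; ring
    have e3 : S * 2 = hh * n * u * (t - 1) * 2 :=
      Nat.eq_of_mul_eq_mul_right htpos (by rw [e1, e2])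
    have e4 : S = hh * n * u * (t - 1) :=
      Nat.eq_of_mul_eq_mul_right two_pos e3
    exact ⟨hh * u * (t - 1), by rw [e4]; ring⟩
  -- n divides wt + 1
  haveI : NeZero n := ⟨hn.ne'⟩
  have hwmod : n ∣ wordWeight w + 1 := by
    have h := hw.2.2.2
    have hz : ((wordWeight w + 1 : ℕ) : ZMod n) = 0 := by
      push_cast
      rw [h]
      ring
    exact (ZMod.natCast_eq_zero_iff _ _).mp hz
  have hnw0 : n ∣ t * w0 + 1 := by
    have hd := Nat.dvd_sub hwmod hnS
    have heq : wordWeight w + 1 - S = t * w0 + 1 := by omega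
    rwa [heq] at hd
  have htn : t ∣ n := ⟨u, htu.symm⟩
  have ht1 : t ∣ 1 := by
    have h1 : t ∣ t * w0 + 1 := htn.trans hnw0
    have h2 : t ∣ t * w0 := Dvd.intro _ rfl
    exact (Nat.dvd_add_right h2).mp h1
  have ht1' : t = 1 := Nat.dvd_one.mp ht1
  have hgk' : g = (m + 1) * n := by rw [← htg, ht1', one_mul]
  have hgj : g ≤ j := Nat.le_of_dvd hj1 (Nat.gcd_dvd_left j ((m + 1) * n))
  omega
end

section
/- Let m, n be positive integers. The cardinality of Y_{m,n} equals the number of subsets S of {1, 2, …, (m+1)n − 1} with |S| = mn whose element sum is congruent to −1 modulo n. -/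
def cmn (m n : ℕ) : ℕ := (m * n - 2) * (n - 1) / 2

def memC (m n : ℕ) (x : Fin (m * n) → Fin n) : Prop :=
  ((∑ i, (x i : ℕ) : ℕ) : ZMod n) = (cmn m n : ZMod n)

def memY (m n : ℕ) (x : Fin (m * n) → Fin n) : Prop :=
  memC m n x ∧ Antitone x

namespace CardYaux

lemma strictMono_step {N : ℕ} {f : Fin N → ℕ} (hf : StrictMono f) :
    ∀ (k : ℕ) (i j : Fin N), (j : ℕ) = (i : ℕ) + k → f i + k ≤ f j := by
  intro k
  induction k with
  | zero =>
    intro i j h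
    have : i = j := Fin.ext (by omega)
    simp [this]
  | succ k ih =>
    intro i j h
    have hlt : (i : ℕ) + k < N := by have := j.isLt; omega
    have h1 : f i + k ≤ f ⟨(i : ℕ) + k, hlt⟩ := ih i _ rfl
    have h2 : f ⟨(i : ℕ) + k, hlt⟩ < f j := hf (by simp [Fin.lt_def]; omega)
    omega

lemma cast_c (m n : ℕ) (hm : 0 < m) (hn : 0 < n) :
    ((cmn m n : ℕ) : ZMod n) = ((∑ i : Fin (m * n), (i : ℕ) : ℕ) : ZMod n) + 1 := by
  rcases Nat.eq_or_lt_of_le hn with h1 | h2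
  · have : (1 : ℕ) = n := h1
    subst this
    exact Subsingleton.elim _ _
  · -- n ≥ 2
    have hN : 2 ≤ m * n := by nlinarith
    obtain ⟨k, hk⟩ : 2 ∣ m * (m - 1) := by
      rcases Nat.even_or_odd m with he | ho
      · exact Dvd.dvd.mul_right he.two_dvd _
      · obtain ⟨t, ht⟩ := ho
        refine Dvd.dvd.mul_left ?_ _
        omega
    have key : (∑ i : Fin (m * n), (i : ℕ)) + 1 = cmn m n + n * (n * k + 1) := by
      have h2c : 2 * cmn m n = (m * n - 2) * (n - 1) := by
        unfold cmn
        have : 2 ∣ (m * n - 2) * (n - 1) := by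
          rcases Nat.even_or_odd n with he | ho
          · refine Dvd.dvd.mul_right ?_ _
            have : 2 ∣ m * n := he.two_dvd.mul_left m
            omega
          · obtain ⟨t, ht⟩ := ho
            refine Dvd.dvd.mul_left ?_ _
            omega
        omega
      have h2t : (∑ i : Fin (m * n), (i : ℕ)) * 2 = (m * n) * (m * n - 1) := by
        rw [← Finset.sum_range_id_mul_two (m * n), Finset.sum_range fun i => i]
      set T := ∑ i : Fin (m * n), (i : ℕ)
      zify [hN, show (1:ℕ) ≤ n from hn, show (1:ℕ) ≤ m * n by omega, show (1:ℕ) ≤ m from hm] at h2c h2t hk ⊢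
      have key2 : 2 * (T : ℤ) + 2 = 2 * (cmn m n : ℤ) + 2 * ((n : ℤ) * ((n : ℤ) * (k : ℤ) + 1)) := by
        linear_combination h2t - h2c + (n : ℤ) * (n : ℤ) * hk
      linarith [key2]
    have hcast := congrArg (Nat.cast : ℕ → ZMod n) key
    push_cast [ZMod.natCast_self] at hcast ⊢
    linear_combination -hcast

end CardYaux

open CardYaux in
/-- `|Y_{m,n}|` equals the number of subsets `S ⊆ {1,…,(m+1)n - 1}` with `|S| = mn`
whose element sum is `≡ -1 (mod n)`. -/
theorem card_Y_eq_card_subsets (m n : ℕ) (hm : 0 < m) (hn : 0 < n) :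
    Nat.card {l : Fin (m * n) → Fin n // memY m n l} =
      Nat.card {S : Finset ℕ // S ⊆ Finset.Icc 1 ((m + 1) * n - 1) ∧ S.card = m * n ∧
        ((∑ s ∈ S, s : ℕ) : ZMod n) = -1} := by
  classical
  set N := m * n with hNdef
  have hNpos : 0 < N := Nat.mul_pos hm hn
  -- generic congruence transfer
  have congr_iff : ∀ a b : ℕ, a + b = N * n + (∑ i : Fin N, (i : ℕ)) →
      (((a : ℕ) : ZMod n) = -1 ↔ ((b : ℕ) : ZMod n) = (cmn m n : ZMod n)) := by
    intro a b hab
    have hc := cast_c m n hm hn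
    have h1 : ((a : ZMod n)) + (b : ZMod n)
        = ((∑ i : Fin N, (i : ℕ) : ℕ) : ZMod n) := by
      have : ((a + b : ℕ) : ZMod n) = ((N * n + (∑ i : Fin N, (i : ℕ)) : ℕ) : ZMod n) := by
        rw [hab]
      push_cast at this
      rw [ZMod.natCast_self] at this
      push_cast
      linear_combination this
    constructor
    · intro h; linear_combination h1 - hc - h
    · intro h; linear_combination h1 - hc - h
  -- the forward map on raw data
  have xlt : ∀ (x : Fin N → Fin n) (i : Fin N), (x i : ℕ) < n := fun x i => (x i).isLt
  have ilt : ∀ i : Fin N, (i : ℕ) < N := fun i => i.isLt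
  set g : (Fin N → Fin n) → Fin N → ℕ :=
    fun x i => (n - 1 - (x i : ℕ)) + (i : ℕ) + 1 with hg
  have g_add : ∀ x i, g x i + (x i : ℕ) = n + (i : ℕ) := by
    intro x i
    have := xlt x i
    simp only [hg]
    omega
  have g_mono : ∀ x : Fin N → Fin n, Antitone x → StrictMono (g x) := by
    intro x hx i j hij
    have h1 : (x j : ℕ) ≤ (x i : ℕ) := hx (le_of_lt hij)
    have h2 := xlt x i
    have h3 : (i : ℕ) < (j : ℕ) := hij
    simp only [hg]
    omega
  have sum_np : ∀ x : Fin N → Fin n,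
      (∑ i, g x i) + (∑ i, (x i : ℕ)) = N * n + (∑ i : Fin N, (i : ℕ)) := by
    intro x
    rw [← Finset.sum_add_distrib]
    have : ∀ i : Fin N, g x i + (x i : ℕ) = n + (i : ℕ) := g_add x
    rw [Finset.sum_congr rfl fun i _ => this i, Finset.sum_add_distrib]
    simp [mul_comm]
  -- forward map
  refine Nat.card_congr ?_
  refine Equiv.ofBijective (fun p => ⟨Finset.image (g p.1) Finset.univ, ?_, ?_, ?_⟩) ⟨?_, ?_⟩
  · -- subset
    intro s hs
    obtain ⟨i, -, rfl⟩ := Finset.mem_image.1 hs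
    have h1 := xlt p.1 i
    have h2 := ilt i
    have h3 : (m + 1) * n - 1 = N + n - 1 := by rw [hNdef]; ring_nf
    rw [Finset.mem_Icc, h3]
    simp only [hg]
    omega
  · -- card
    rw [Finset.card_image_of_injective _ (g_mono p.1 p.2.2).injective]
    simp
    exact hNdef
  · -- sum
    have hinj : ∀ i ∈ Finset.univ, ∀ j ∈ Finset.univ, g p.1 i = g p.1 j → i = j :=
      fun i _ j _ h => (g_mono p.1 p.2.2).injective h
    rw [Finset.sum_image hinj]
    exact (congr_iff _ _ (sum_np p.1)).2 p.2.1
  · -- injective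
    rintro ⟨x, hx⟩ ⟨y, hy⟩ h
    simp only [Subtype.mk.injEq] at h ⊢
    have hcx : (Finset.image (g x) Finset.univ).card = N := by
      rw [Finset.card_image_of_injective _ (g_mono x hx.2).injective]; simp
    have hgx : g x = (Finset.image (g x) Finset.univ).orderEmbOfFin hcx :=
      Finset.orderEmbOfFin_unique hcx (fun i => Finset.mem_image_of_mem _ (Finset.mem_univ i))
        (g_mono x hx.2)
    have hgy : g y = (Finset.image (g x) Finset.univ).orderEmbOfFin hcx := by
      refine Finset.orderEmbOfFin_unique hcx
        (fun i => h ▸ Finset.mem_image_of_mem _ (Finset.mem_univ i)) (g_mono y hy.2)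
    have hxy : g x = g y := hgx.trans hgy.symm
    funext i
    have h1 := congrFun hxy i
    have h2 := g_add x i
    have h3 := g_add y i
    exact Fin.ext (by omega)
  · -- surjective
    rintro ⟨S, hsub, hcard, hsum⟩
    set e := S.orderEmbOfFin hcard with he
    have hmem : ∀ i, e i ∈ S := fun i => S.orderEmbOfFin_mem hcard i
    have hbound : ∀ i : Fin N, 1 ≤ e i ∧ e i ≤ (m + 1) * n - 1 := by
      intro i
      exact Finset.mem_Icc.1 (hsub (hmem i))
    have hIcc : (m + 1) * n - 1 = N + n - 1 := by rw [hNdef]; ring_nf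
    have lo : ∀ i : Fin N, (i : ℕ) + 1 ≤ e i := by
      intro i
      have h0 : e ⟨0, hNpos⟩ + (i : ℕ) ≤ e i :=
        strictMono_step e.strictMono (i : ℕ) ⟨0, hNpos⟩ i (by simp)
      have := (hbound ⟨0, hNpos⟩).1
      omega
    have hi : ∀ i : Fin N, e i ≤ n + (i : ℕ) := by
      intro i
      have hil := ilt i
      have h0 : e i + (N - 1 - (i : ℕ)) ≤ e ⟨N - 1, by omega⟩ :=
        strictMono_step e.strictMono _ i ⟨N - 1, by omega⟩ (by simp; omega)
      have h4 := (hbound ⟨N - 1, by omega⟩).2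
      rw [hIcc] at h4
      omega
    set x : Fin N → Fin n := fun i => ⟨n - 1 - (e i - ((i : ℕ) + 1)), by omega⟩ with hx
    have xval : ∀ i, (x i : ℕ) + e i = n + (i : ℕ) := by
      intro i
      have h1 := lo i
      have h2 := hi i
      simp only [hx]
      omega
    have gxe : g x = fun i => e i := by
      funext i
      have h1 := g_add x i
      have h2 := xval i
      omega
    have hanti : Antitone x := by
      intro i j hij
      have h3 : (i : ℕ) ≤ (j : ℕ) := hij
      have hstep : e i + ((j : ℕ) - (i : ℕ)) ≤ e j :=
        strictMono_step e.strictMono _ i j (by omega)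
      have h1 := xval i
      have h2 := xval j
      rw [Fin.le_def]
      omega
    have himg : Finset.image (g x) Finset.univ = S := by
      rw [gxe]
      apply Finset.eq_of_subset_of_card_le
      · intro s hs
        obtain ⟨i, -, rfl⟩ := Finset.mem_image.1 hs
        exact hmem i
      · rw [hcard, Finset.card_image_of_injective _ e.injective]
        simp
    have hmemC : memC m n x := by
      have hS : ∑ s ∈ S, s = ∑ i, e i := by
        rw [← himg, gxe, Finset.sum_image fun i _ j _ h => e.injective h]
      refine (congr_iff (∑ i, e i) (∑ i, (x i : ℕ)) ?_).1 ?_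
      · calc (∑ i, (e i : ℕ)) + (∑ i, (x i : ℕ))
              = ∑ i : Fin N, ((e i : ℕ) + (x i : ℕ)) := by rw [Finset.sum_add_distrib]
          _ = ∑ i : Fin N, (n + (i : ℕ)) :=
              Finset.sum_congr rfl fun i _ => by have := xval i; omega
          _ = N * n + ∑ i : Fin N, (i : ℕ) := by
              rw [Finset.sum_add_distrib]; simp [mul_comm]
      · rw [← hS]; exact hsum
    exact ⟨⟨x, hmemC, hanti⟩, Subtype.ext himg⟩
end

section
/- Let m, n be positive integers and let λ ∈ Y_{m,n}. Then the n tuples sort(shift^j(λ)) for j = 0, 1, …, n−1 are pairwise distinct; that is, the set {sort(shift^j(λ)) : 0 ≤ j ≤ n−1} has cardinality exactly n. -/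
/-- The shift map: add `1` to every coordinate, reducing modulo `n`. -/
def shift {N n : ℕ} (x : Fin N → Fin n) : Fin N → Fin n :=
  fun i => ⟨((x i : ℕ) + 1) % n, Nat.mod_lt _ (x i).pos⟩

/-- The weakly decreasing rearrangement of a tuple. -/
def sortDesc {N : ℕ} {α : Type*} [LinearOrder α] (x : Fin N → α) : Fin N → α :=
  fun i => x (Tuple.sort x i.rev)

/- ### Auxiliary lemmas -/

lemma shift_iter_cast {N n : ℕ} (x : Fin N → Fin n) (k : ℕ) (i : Fin N) :
    ((shift^[k] x i : ℕ) : ZMod n) = ((x i : ℕ) : ZMod n) + (k : ZMod n) := by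
  induction k with
  | zero => simp
  | succ k ih =>
    rw [Function.iterate_succ_apply']
    show ((((shift^[k] x i : ℕ) + 1) % n : ℕ) : ZMod n) = _
    rw [ZMod.natCast_mod]
    push_cast [ih]
    ring

lemma sum_range_block {M : Type*} [AddCommMonoid M] (f : ℕ → M) (g t : ℕ) :
    ∑ v ∈ Finset.range (g * t), f v
      = ∑ q ∈ Finset.range t, ∑ r ∈ Finset.range g, f (q * g + r) := by
  induction t with
  | zero => simp
  | succ t ih =>
    rw [Nat.mul_succ, Finset.sum_range_add, Finset.sum_range_succ, ih]
    congr 1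
    exact Finset.sum_congr rfl fun r _ => by rw [mul_comm g t]

lemma two_cmn (m n : ℕ) (hm : 1 ≤ m) (hn : 2 ≤ n) :
    2 * cmn m n + m * n + 2 * n = m * n * n + 2 := by
  obtain ⟨b, rfl⟩ : ∃ b, n = b + 1 := ⟨n - 1, by omega⟩
  have h2le : 2 ≤ m * (b + 1) := by
    calc 2 ≤ b + 1 := hn
    _ = 1 * (b + 1) := (one_mul _).symm
    _ ≤ m * (b + 1) := Nat.mul_le_mul_right _ hm
  obtain ⟨a, ha⟩ : ∃ a, m * (b + 1) = a + 2 := ⟨m * (b + 1) - 2, by omega⟩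
  have h2 : 2 ∣ (m * (b + 1) - 2) * (b + 1 - 1) := by
    rcases Nat.even_or_odd b with ⟨j, hj⟩ | ⟨j, hj⟩
    · exact Dvd.dvd.mul_left ⟨j, by omega⟩ _
    · have hb : m * (b + 1) = 2 * (m * (j + 1)) := by rw [hj]; ring
      exact Dvd.dvd.mul_right ⟨m * (j + 1) - 1, by omega⟩ _
  have hc : 2 * cmn m (b + 1) = (m * (b + 1) - 2) * (b + 1 - 1) := by
    rw [cmn, Nat.mul_div_cancel' h2]
  rw [hc]
  have hab : m * (b + 1) - 2 = a := by omega
  rw [hab, ha]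
  simp only [Nat.add_sub_cancel]
  ring

lemma gauss_sq (g : ℕ) : ∃ k, g * g = g + 2 * k := by
  induction g with
  | zero => exact ⟨0, rfl⟩
  | succ g ih =>
    obtain ⟨k, hk⟩ := ih
    refine ⟨k + g, ?_⟩
    have : (g + 1) * (g + 1) = g * g + 2 * g + 1 := by ring
    omega

lemma fiber_sum {N n : ℕ} [NeZero n] (F : Fin N → ZMod n) (φ : ℕ → ℕ) :
    ∑ v ∈ Finset.range n, φ v * (Finset.univ.filter fun i => F i = (v : ZMod n)).card
      = ∑ i, φ (F i).val := by
  simp_rw [Finset.card_filter, Finset.mul_sum, mul_ite, mul_one, mul_zero]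
  rw [Finset.sum_comm]
  refine Finset.sum_congr rfl fun i _ => ?_
  rw [Finset.sum_eq_single (F i).val]
  · have hcond : F i = (((F i).val : ℕ) : ZMod n) := by
      rw [ZMod.natCast_val, ZMod.cast_id]
    rw [if_pos hcond]
  · intro v hv hne
    apply if_neg
    intro h
    exact hne (by rw [h, ZMod.val_natCast_of_lt (Finset.mem_range.mp hv)])
  · intro h
    exact absurd (Finset.mem_range.mpr (ZMod.val_lt (F i))) h

/-- For `λ ∈ Y_{m,n}`, the `n` tuples `sort(shiftʲ(λ))`, `0 ≤ j ≤ n-1`, are pairwise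
distinct; i.e. the set of these tuples has cardinality exactly `n`. -/
theorem sort_shift_injective (m n : ℕ) (hm : 0 < m) (hn : 0 < n)
    (l : Fin (m * n) → Fin n) (hl : memY m n l) :
    Function.Injective (fun j : Fin n => sortDesc (shift^[(j : ℕ)] l)) := by
  rcases Nat.lt_or_ge n 2 with hn1 | hn2
  · -- n = 1 : Fin 1 is a subsingleton
    intro a b _
    have : n = 1 := by omega
    subst this
    exact Subsingleton.elim a b
  haveI : NeZero n := ⟨by omega⟩
  intro a b hab
  by_contra hne
  -- Step A: a rearrangement equivalence
  set X := shift^[(a : ℕ)] l with hX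
  set Y := shift^[(b : ℕ)] l with hY
  have hab' : sortDesc X = sortDesc Y := hab
  set p : Equiv.Perm (Fin (m * n)) := (Fin.revPerm : Equiv.Perm (Fin (m * n))).trans (Tuple.sort X)
  set q : Equiv.Perm (Fin (m * n)) := (Fin.revPerm : Equiv.Perm (Fin (m * n))).trans (Tuple.sort Y)
  have hpq : ∀ i, X (p i) = Y (q i) := fun i => congrFun hab' i
  set e : Equiv.Perm (Fin (m * n)) := p.symm.trans q with he_def
  have he : ∀ j, X j = Y (e j) := by
    intro j
    have := hpq (p.symm j)
    simpa [he_def, Equiv.trans_apply] using this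
  -- Step B: cast to ZMod n
  set F : Fin (m * n) → ZMod n := fun i => ((l i : ℕ) : ZMod n) with hF
  set d : ZMod n := ((b : ℕ) : ZMod n) - ((a : ℕ) : ZMod n) with hd
  have hd0 : d ≠ 0 := by
    intro h
    apply hne
    have : ((b : ℕ) : ZMod n) = ((a : ℕ) : ZMod n) := by
      rwa [hd, sub_eq_zero] at h
    have hv : (b : ℕ) = (a : ℕ) := by
      have := congrArg ZMod.val this
      rwa [ZMod.val_natCast_of_lt b.isLt, ZMod.val_natCast_of_lt a.isLt] at this
    exact (Fin.ext hv).symm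
  have hFd : ∀ j, F j = F (e j) + d := by
    intro j
    have h1 := congrArg (fun z : Fin n => ((z : ℕ) : ZMod n)) (he j)
    rw [hX, hY, shift_iter_cast, shift_iter_cast] at h1
    rw [hF, hd]
    simp only
    linear_combination h1
  -- Step C: counting function invariance
  set cntZ : ZMod n → ℕ := fun c => (Finset.univ.filter fun i => F i = c).card with hcntZ
  have hshift : ∀ c, cntZ (c + d) = cntZ c := by
    intro c
    apply Finset.card_bij (fun i _ => e i)
    · intro i hi
      simp only [Finset.mem_filter, Finset.mem_univ, true_and] at hi ⊢
      have := hFd i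
      rw [hi] at this
      exact (add_right_cancel this.symm)
    · intro i₁ _ i₂ _ h
      exact e.injective h
    · intro i' hi'
      simp only [Finset.mem_filter, Finset.mem_univ, true_and] at hi'
      refine ⟨e.symm i', ?_, by simp⟩
      simp only [Finset.mem_filter, Finset.mem_univ, true_and]
      rw [hFd (e.symm i'), e.apply_symm_apply, hi']
  have hzsmul : ∀ (u : ℤ) (c : ZMod n), cntZ (c + u • d) = cntZ c := by
    intro u
    induction u using Int.induction_on with
    | zero => simp
    | succ i ih =>
      intro c
      have : c + ((i : ℤ) + 1) • d = (c + (i : ℤ) • d) + d := by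
        rw [add_smul, one_smul]; ring
      rw [this, hshift, ih]
    | pred i ih =>
      intro c
      have key : (c + (-(i : ℤ) - 1) • d) + d = c + (-(i : ℤ)) • d := by
        rw [sub_smul, one_smul]; ring
      have h2 := hshift (c + (-(i : ℤ) - 1) • d)
      rw [key] at h2
      rw [← h2]
      exact ih c
  -- Step D: invariance under the gcd
  set g : ℕ := Nat.gcd d.val n with hg_def
  have hdval_pos : 0 < d.val := by
    have : d.val ≠ 0 := fun h => hd0 ((ZMod.val_eq_zero d).mp h)
    omega
  have hdval_lt : d.val < n := ZMod.val_lt d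
  have hg_pos : 0 < g := Nat.gcd_pos_of_pos_right _ (by omega)
  have hg_dvd : g ∣ n := Nat.gcd_dvd_right _ _
  have hg_lt : g < n := lt_of_le_of_lt (Nat.gcd_le_left _ hdval_pos) hdval_lt
  set t : ℕ := n / g with ht_def
  have hgt : g * t = n := Nat.mul_div_cancel' hg_dvd
  have ht2 : 2 ≤ t := by
    rcases t with _ | _ | t
    · omega
    · omega
    · omega
  -- gcd is an integer combination of d.val and n, hence cntZ is g-periodic
  have hgcast : ∃ u : ℤ, u • d = ((g : ℕ) : ZMod n) := by
    refine ⟨Nat.gcdA d.val n, ?_⟩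
    have hbez : (g : ℤ) = d.val * Nat.gcdA d.val n + n * Nat.gcdB d.val n :=
      Nat.gcd_eq_gcd_ab d.val n
    have := congrArg (fun z : ℤ => ((z : ℤ) : ZMod n)) hbez
    push_cast at this
    rw [ZMod.natCast_self] at this
    rw [zsmul_eq_mul]
    rw [ZMod.natCast_val, ZMod.cast_id] at this
    rw [this]
    ring
  have hgper : ∀ c : ZMod n, cntZ (c + ((g : ℕ) : ZMod n)) = cntZ c := by
    obtain ⟨u, hu⟩ := hgcast
    intro c
    rw [← hu]
    exact hzsmul u c
  -- counting as a function on naturals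
  set cnt : ℕ → ℕ := fun v => cntZ ((v : ℕ) : ZMod n) with hcnt
  have hper : ∀ v, cnt (v + g) = cnt v := by
    intro v
    have := hgper ((v : ℕ) : ZMod n)
    simp only [hcnt]
    push_cast
    exact this
  have hblock : ∀ qq r, cnt (qq * g + r) = cnt r := by
    intro qq
    induction qq with
    | zero => simp
    | succ qq ih =>
      intro r
      have : (qq + 1) * g + r = (qq * g + r) + g := by ring
      rw [this, hper, ih]
  -- the sums
  set S : ℕ := ∑ i, (l i : ℕ) with hS_def
  set P : ℕ := ∑ r ∈ Finset.range g, cnt r with hP_def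
  set R : ℕ := ∑ r ∈ Finset.range g, r * cnt r with hR_def
  have hFval : ∀ i, (F i).val = (l i : ℕ) := fun i => ZMod.val_natCast_of_lt (l i).isLt
  have hsum1 : ∑ v ∈ Finset.range n, cnt v = m * n := by
    have := fiber_sum F (fun _ => 1)
    simp only [one_mul] at this
    rw [show (∑ v ∈ Finset.range n, cnt v) = ∑ v ∈ Finset.range n,
      (Finset.univ.filter fun i => F i = (v : ZMod n)).card from rfl, this]
    simp
  have hsum2 : ∑ v ∈ Finset.range n, v * cnt v = S := by
    have := fiber_sum F id
    simp only [id] at this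
    rw [show (∑ v ∈ Finset.range n, v * cnt v) = ∑ v ∈ Finset.range n,
      v * (Finset.univ.filter fun i => F i = (v : ZMod n)).card from rfl, this]
    rw [hS_def]
    exact Finset.sum_congr rfl fun i _ => hFval i
  -- block decomposition
  have hblocksum1 : t * P = m * (g * t) := by
    have h0 : ∑ v ∈ Finset.range (g * t), cnt v = t * P := by
      rw [sum_range_block]
      rw [Finset.sum_congr rfl fun qq _ => Finset.sum_congr rfl fun r _ => hblock qq r]
      rw [← hP_def, Finset.sum_const, Finset.card_range, smul_eq_mul]
    rw [← h0, hgt]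
    exact hsum1
  have hT2 : 2 * (∑ i ∈ Finset.range t, i) + t = t * t := by
    have h1 := Finset.sum_range_id_mul_two t
    have h2 : t * (t - 1) = t * t - t * 1 := Nat.mul_sub t t 1
    have h3 : t ≤ t * t := Nat.le_mul_of_pos_left t (by omega)
    omega
  have hS_blocks : S = g * P * (∑ i ∈ Finset.range t, i) + t * R := by
    have h0 : ∀ qq ∈ Finset.range t, (∑ r ∈ Finset.range g, (qq * g + r) * cnt (qq * g + r))
        = g * P * qq + R := by
      intro qq _
      have e1 : ∀ r ∈ Finset.range g,
          (qq * g + r) * cnt (qq * g + r) = g * cnt r * qq + r * cnt r :=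
        fun r _ => by rw [hblock qq r]; ring
      rw [Finset.sum_congr rfl e1, Finset.sum_add_distrib, ← Finset.sum_mul,
        ← Finset.mul_sum, ← hP_def, ← hR_def]
    have h1 : ∑ v ∈ Finset.range (g * t), v * cnt v
        = g * P * (∑ i ∈ Finset.range t, i) + t * R := by
      rw [sum_range_block, Finset.sum_congr rfl h0, Finset.sum_add_distrib,
        ← Finset.mul_sum, Finset.sum_const, Finset.card_range, smul_eq_mul]
    rw [← hsum2, ← hgt, h1]
  have F1 : 2 * S + g * t * P = g * t * t * P + 2 * t * R := by
    have h1 : 2 * S = g * P * (2 * (∑ i ∈ Finset.range t, i)) + 2 * (t * R) := by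
      rw [hS_blocks]; ring
    calc 2 * S + g * t * P
        = g * P * (2 * (∑ i ∈ Finset.range t, i) + t) + 2 * (t * R) := by rw [h1]; ring
      _ = g * t * t * P + 2 * t * R := by rw [hT2]; ring
  have F3 : 2 * cmn m n + m * (g * t) + 2 * (g * t) = m * (g * t) * (g * t) + 2 := by
    rw [hgt]; exact two_cmn m n hm hn2
  -- the congruence S ≡ cmn (mod n)
  have hmod : S ≡ cmn m n [MOD n] := (ZMod.natCast_eq_natCast_iff _ _ _).mp hl.1
  have hmod2 : 2 * S ≡ 2 * cmn m n [MOD 2 * n] := hmod.mul_left' 2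
  have htdvd : (2 * t : ℕ) ∣ 2 * n := mul_dvd_mul_left 2 ⟨g, by rw [← hgt, Nat.mul_comm]⟩
  have hmod3 : 2 * S ≡ 2 * cmn m n [MOD 2 * t] := hmod2.of_dvd htdvd
  -- endgame in ZMod (2*t)
  obtain ⟨k, hk⟩ := gauss_sq g
  haveI : NeZero (2 * t) := ⟨by omega⟩
  have key : (2 : ZMod (2 * t)) = 0 := by
    have F1c := congrArg (fun x : ℕ => (x : ZMod (2 * t))) F1
    have F2c := congrArg (fun x : ℕ => (x : ZMod (2 * t))) hblocksum1
    have F3c := congrArg (fun x : ℕ => (x : ZMod (2 * t))) F3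
    have F5c := congrArg (fun x : ℕ => (x : ZMod (2 * t))) hk
    have hSc : ((2 * S : ℕ) : ZMod (2 * t)) = ((2 * cmn m n : ℕ) : ZMod (2 * t)) :=
      (ZMod.natCast_eq_natCast_iff _ _ _).mpr hmod3
    have hMc : ((2 * t : ℕ) : ZMod (2 * t)) = 0 := ZMod.natCast_self _
    push_cast at F1c F2c F3c F5c hSc hMc
    linear_combination (-1 : ZMod (2 * t)) * F3c - hSc + F1c
      + (((g : ZMod (2 * t)) * t - g)) * F2c - ((m : ZMod (2 * t)) * t) * F5c
      + (((R : ZMod (2 * t)) + g) - (m : ZMod (2 * t)) * k) * hMc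
  have hdvd2 : (2 * t) ∣ 2 := by
    exact_mod_cast (ZMod.natCast_eq_zero_iff 2 (2 * t)).mp (by exact_mod_cast key)
  have := Nat.le_of_dvd (by norm_num) hdvd2
  omega
end

section
/- Let n ≥ 2. The number of lattice points of the permutahedron P_{δ_n} equals n^{n−2}; that is, |{x ∈ ℤ^n : x ∈ convexHull(S_n-orbit of δ_n)}| = n^{n−2}. -/
/-- The tuple `δ_n = (n-2, n-3, …, 1, 0, 0)`: its `i`-th coordinate (0-indexed) is
`n - 2 - i` (natural subtraction). -/
def deltaTuple (n : ℕ) : Fin n → ℕ := fun i => n - 2 - (i : ℕ)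

/-- The vertices of the permutahedron `P_{δ_n}`: all coordinate permutations of `δ_n`,
viewed as points of `ℝⁿ`. -/
def permutahedronVerts (n : ℕ) : Set (Fin n → ℝ) :=
  {y | ∃ σ : Equiv.Perm (Fin n), y = fun i => (deltaTuple n (σ i) : ℝ)}

/-- The lattice points of `P_{δ_n}`: integer points whose real image lies in the convex
hull of the coordinate permutations of `δ_n`. -/
def latticePts (n : ℕ) : Set (Fin n → ℤ) :=
  {x | (fun i => (x i : ℝ)) ∈ convexHull ℝ (permutahedronVerts n)}


namespace Perma

variable (n : ℕ)

/-- integer version of delta as a function on ℕ -/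
def dzv (i : ℕ) : ℤ := ((n - 2 - i : ℕ) : ℤ)

def dI (i : Fin n) : ℤ := dzv n i.val

/-- sum of the `k` largest entries of δ -/
def topsum (k : ℕ) : ℤ := ∑ i ∈ Finset.range k, dzv n i

def gtot : ℤ := topsum n n

lemma topsum_one (hn : 2 ≤ n) : topsum n 1 = (n : ℤ) - 2 := by
  simp [topsum, dzv]
  omega

lemma topsum_two_mul {k : ℕ} (hk : k ≤ n - 1) :
    2 * topsum n k = (k : ℤ) * (2 * n - 3 - k) := by
  induction k with
  | zero => simp [topsum]
  | succ m ih =>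
    have hm : m ≤ n - 1 := by omega
    have e : topsum n (m + 1) = topsum n m + dzv n m := by
      simp [topsum, Finset.sum_range_succ]
    have hd : 2 * dzv n m = 2 * (n : ℤ) - 4 - 2 * m := by
      simp only [dzv]
      omega
    have := ih hm
    push_cast
    push_cast at this
    rw [e]
    ring_nf
    ring_nf at this hd
    linarith

lemma gtot_eq : gtot n = topsum n (n - 1) := by
  rcases Nat.eq_zero_or_pos n with h | h
  · subst h; simp [gtot]
  · have h1 : n - 1 + 1 = n := by omega
    have : topsum n (n - 1 + 1) = topsum n (n - 1) + dzv n (n - 1) := by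
      rw [topsum, Finset.sum_range_succ, ← topsum]
    rw [h1] at this
    have hz : dzv n (n - 1) = 0 := by
      simp only [dzv]
      omega
    rw [gtot, this, hz, add_zero]

lemma gtot_two_mul (hn : 1 ≤ n) : 2 * gtot n = ((n : ℤ) - 1) * ((n : ℤ) - 2) := by
  rw [gtot_eq]
  have h2 := topsum_two_mul n (le_refl (n - 1))
  rw [h2]
  have : ((n - 1 : ℕ) : ℤ) = (n : ℤ) - 1 := by omega
  rw [this]; ring

lemma sum_dI : ∑ i : Fin n, dI n i = gtot n := by
  have := Fin.sum_univ_eq_sum_range (fun j => dzv n j) n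
  simpa [dI, gtot, topsum] using this

/-- key: sum of δ over any k-subset is at most topsum k -/
lemma sum_subset_le (T : Finset (Fin n)) :
    ∑ i ∈ T, dI n i ≤ topsum n T.card := by
  set k := T.card with hk
  have hkn : k ≤ n := by rw [hk]; simpa using Finset.card_le_card (Finset.subset_univ T)
  set t : ℤ := dzv n k with ht
  -- step 1 : ∑_T dI ≤ k * t + ∑_{i : Fin n} ((dI i - t).toNat : ℤ)
  have step1 : ∑ i ∈ T, dI n i ≤ (k : ℤ) * t + ∑ i : Fin n, (((dI n i - t).toNat : ℤ)) := by
    have e1 : ∑ i ∈ T, dI n i = (∑ i ∈ T, (dI n i - t)) + (k : ℤ) * t := by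
      rw [Finset.sum_sub_distrib, Finset.sum_const, ← hk, nsmul_eq_mul]
      ring
    rw [e1]
    have h2 : ∑ i ∈ T, (dI n i - t) ≤ ∑ i ∈ T, (((dI n i - t).toNat : ℤ)) := by
      apply Finset.sum_le_sum
      intro i _
      omega
    have h3 : ∑ i ∈ T, (((dI n i - t).toNat : ℤ)) ≤ ∑ i : Fin n, (((dI n i - t).toNat : ℤ)) := by
      apply Finset.sum_le_sum_of_subset_of_nonneg (Finset.subset_univ T)
      intro i _ _
      positivity
    linarith
  -- step 2 : ∑_{i : Fin n} ((dI i - t).toNat : ℤ) = topsum k - k * t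
  have step2 : ∑ i : Fin n, (((dI n i - t).toNat : ℤ)) = topsum n k - (k : ℤ) * t := by
    have hr := Fin.sum_univ_eq_sum_range (fun j => (((dzv n j - t).toNat : ℤ))) n
    have hr' : ∑ i : Fin n, (((dI n i - t).toNat : ℤ)) = ∑ i ∈ Finset.range n, (((dzv n i - t).toNat : ℤ)) := hr
    rw [hr']
    have hsplit : ∑ i ∈ Finset.range n, (((dzv n i - t).toNat : ℤ)) =
        ∑ i ∈ Finset.range k, (((dzv n i - t).toNat : ℤ)) +
          ∑ i ∈ Finset.Ico k n, (((dzv n i - t).toNat : ℤ)) := by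
      rw [Finset.range_eq_Ico, ← Finset.sum_Ico_consecutive _ (Nat.zero_le k) hkn, Finset.range_eq_Ico]
    rw [hsplit]
    have e1 : ∑ i ∈ Finset.range k, (((dzv n i - t).toNat : ℤ)) = ∑ i ∈ Finset.range k, (dzv n i - t) := by
      apply Finset.sum_congr rfl
      intro i hi
      simp only [Finset.mem_range] at hi
      have : t ≤ dzv n i := by simp only [ht, dzv]; omega
      omega
    have e2 : ∑ i ∈ Finset.Ico k n, (((dzv n i - t).toNat : ℤ)) = 0 := by
      apply Finset.sum_eq_zero
      intro i hi
      simp only [Finset.mem_Ico] at hi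
      have : dzv n i ≤ t := by simp only [ht, dzv]; omega
      omega
    rw [e1, e2, add_zero, Finset.sum_sub_distrib, Finset.sum_const, Finset.card_range]
    rw [← topsum]
    push_cast
    ring
  linarith

end Perma

namespace Perma2

variable {n : ℕ}

/-- `F y t = ∑ i max(y i - t, 0)` -/
def F (y : Fin n → ℤ) (t : ℤ) : ℤ := ∑ i, (((y i - t).toNat : ℤ))

/-- number of coordinates `≥ t` -/
def cnt (y : Fin n → ℤ) (t : ℤ) : ℕ := (Finset.univ.filter fun i => t ≤ y i).card

lemma F_nonneg (y : Fin n → ℤ) (t : ℤ) : 0 ≤ F y t :=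
  Finset.sum_nonneg fun i _ => by positivity

lemma F_step (y : Fin n → ℤ) (t : ℤ) : F y t = F y (t + 1) + (cnt y (t + 1) : ℤ) := by
  have h : ∀ i : Fin n, (((y i - t).toNat : ℤ)) =
      ((y i - (t + 1)).toNat : ℤ) + (if t + 1 ≤ y i then (1 : ℤ) else 0) := by
    intro i; split_ifs with h <;> omega
  rw [F, Finset.sum_congr rfl fun i _ => h i, Finset.sum_add_distrib, ← F]
  congr 1
  rw [Finset.sum_boole, cnt]

lemma cnt_mono (y : Fin n → ℤ) {s t : ℤ} (h : s ≤ t) : cnt y t ≤ cnt y s := by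
  apply Finset.card_le_card
  intro i hi
  simp only [Finset.mem_filter] at hi ⊢
  exact ⟨hi.1, le_trans h hi.2⟩

lemma F_eq_zero (y : Fin n → ℤ) {t : ℤ} (h : ∀ i, y i ≤ t) : F y t = 0 :=
  Finset.sum_eq_zero fun i _ => by have := h i; omega

lemma F_eq_low (y : Fin n → ℤ) {t : ℤ} (h : ∀ i, t ≤ y i) :
    F y t = (∑ i, y i) - n * t := by
  rw [F]
  have : ∀ i : Fin n, (((y i - t).toNat : ℤ)) = y i - t := fun i => by have := h i; omega
  rw [Finset.sum_congr rfl fun i _ => this i, Finset.sum_sub_distrib, Finset.sum_const,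
    Finset.card_univ, Fintype.card_fin, nsmul_eq_mul]

lemma coord_le_abs_sum (y : Fin n → ℤ) (i : Fin n) : y i ≤ ∑ k, |y k| := by
  calc y i ≤ |y i| := le_abs_self _
    _ ≤ ∑ k, |y k| := Finset.single_le_sum (fun k _ => abs_nonneg (y k)) (Finset.mem_univ i)

lemma neg_abs_sum_le_coord (y : Fin n → ℤ) (i : Fin n) : -(∑ k, |y k|) ≤ y i := by
  have h1 : -y i ≤ |y i| := neg_le_abs _
  have h2 : |y i| ≤ ∑ k, |y k| :=
    Finset.single_le_sum (fun k _ => abs_nonneg (y k)) (Finset.mem_univ i)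
  omega

lemma abs_sum_nonneg (y : Fin n → ℤ) : 0 ≤ ∑ k, |y k| :=
  Finset.sum_nonneg fun k _ => abs_nonneg _

/-- multiset-equality case: if the F functions agree, x is a permutation of a -/
lemma exists_perm_of_F_eq (a x : Fin n → ℤ) (h : ∀ t, F x t = F a t) :
    ∃ σ : Equiv.Perm (Fin n), ∀ i, a (σ i) = x i := by
  have hcnt : ∀ t, cnt x t = cnt a t := by
    intro t
    have h1 := F_step x (t - 1)
    have h2 := F_step a (t - 1)
    have h3 := h (t - 1)
    have h4 := h t
    rw [sub_add_cancel] at h1 h2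
    omega
  have hfib : ∀ v : ℤ, (Finset.univ.filter fun i => x i = v).card
      = (Finset.univ.filter fun i => a i = v).card := by
    intro v
    have key : ∀ y : Fin n → ℤ, cnt y v = cnt y (v + 1) + (Finset.univ.filter fun i => y i = v).card := by
      intro y
      rw [cnt, cnt, ← Finset.card_union_of_disjoint (by
        simp only [Finset.disjoint_left, Finset.mem_filter]
        rintro i ⟨-, h1⟩ ⟨-, h2⟩
        omega)]
      congr 1
      ext i
      simp only [Finset.mem_filter, Finset.mem_union, Finset.mem_univ, true_and]
      omega
    have k1 := key x
    have k2 := key a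
    have c1 := hcnt v
    have c2 := hcnt (v + 1)
    omega
  have hcard : ∀ v : ℤ, Fintype.card {i // x i = v} = Fintype.card {i // a i = v} := by
    intro v
    rw [Fintype.card_subtype, Fintype.card_subtype]
    exact hfib v
  have e : ∀ v : ℤ, {i // x i = v} ≃ {i // a i = v} := fun v =>
    Fintype.equivOfCardEq (hcard v)
  refine ⟨(Equiv.sigmaFiberEquiv x).symm.trans ((Equiv.sigmaCongrRight e).trans
    (Equiv.sigmaFiberEquiv a)), fun i => ?_⟩
  exact (e (x i) ⟨i, rfl⟩).2



/-- orbit of `a` under coordinate permutations, in ℝ -/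
def orb (a : Fin n → ℤ) : Set (Fin n → ℝ) :=
  {y | ∃ σ : Equiv.Perm (Fin n), y = fun i => (a (σ i) : ℝ)}

theorem rado_aux (N : ℕ) : ∀ (a x : Fin n → ℤ),
    (∑ i, (a i)^2).toNat ≤ N → (∑ i, x i = ∑ i, a i) → (∀ t, F x t ≤ F a t) →
    (fun i => (x i : ℝ)) ∈ convexHull ℝ (orb a) := by
  induction N using Nat.strong_induction_on with
  | _ N ih =>
  intro a x hN hsum hmaj
  by_cases hEq : ∀ t, F a t ≤ F x t
  · have hfeq : ∀ t, F x t = F a t := fun t => le_antisymm (hmaj t) (hEq t)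
    obtain ⟨σ, hσ⟩ := exists_perm_of_F_eq a x hfeq
    apply subset_convexHull
    exact ⟨σ, by funext i; rw [hσ i]⟩
  · push_neg at hEq
    obtain ⟨t0, ht0⟩ := hEq
    -- bound for find arguments
    set Ba := ∑ k, |a k| with hBa
    set Bx := ∑ k, |x k| with hBx
    have hBa0 : 0 ≤ Ba := abs_sum_nonneg a
    have hBx0 : 0 ≤ Bx := abs_sum_nonneg x
    -- right end
    have hP2 : ∃ m : ℕ, F a (t0 + 1 + m) = F x (t0 + 1 + m) := by
      refine ⟨(Ba + Bx - t0 - 1).toNat, ?_⟩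
      have h1 : ∀ i, a i ≤ t0 + 1 + ((Ba + Bx - t0 - 1).toNat : ℤ) := by
        intro i; have := coord_le_abs_sum a i; omega
      have h2 : ∀ i, x i ≤ t0 + 1 + ((Ba + Bx - t0 - 1).toNat : ℤ) := by
        intro i; have := coord_le_abs_sum x i; omega
      rw [F_eq_zero a h1, F_eq_zero x h2]
    have hP1 : ∃ m : ℕ, F a (t0 - 1 - m) = F x (t0 - 1 - m) := by
      refine ⟨(t0 - 1 + Ba + Bx).toNat, ?_⟩
      have h1 : ∀ i, (t0 - 1 - ((t0 - 1 + Ba + Bx).toNat : ℤ)) ≤ a i := by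
        intro i; have := neg_abs_sum_le_coord a i; omega
      have h2 : ∀ i, (t0 - 1 - ((t0 - 1 + Ba + Bx).toNat : ℤ)) ≤ x i := by
        intro i; have := neg_abs_sum_le_coord x i; omega
      rw [F_eq_low a h1, F_eq_low x h2, hsum]
    set m2 := Nat.find hP2 with hm2
    set m1 := Nat.find hP1 with hm1
    set t2 : ℤ := t0 + m2 with ht2
    set t1 : ℤ := t0 - m1 with ht1
    have ht12 : t1 ≤ t0 ∧ t0 ≤ t2 := by constructor <;> [simp [ht1]; simp [ht2]] <;> positivity
    have hg2 : F a (t2 + 1) = F x (t2 + 1) := by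
      have h := Nat.find_spec hP2
      rw [← hm2] at h
      have e : t2 + 1 = t0 + 1 + (m2 : ℤ) := by rw [ht2]; ring
      rw [e]; exact h
    have hg1 : F a (t1 - 1) = F x (t1 - 1) := by
      have h := Nat.find_spec hP1
      rw [← hm1] at h
      have e : t1 - 1 = t0 - 1 - (m1 : ℤ) := by rw [ht1]; ring
      rw [e]; exact h
    -- positivity of the gap on [t1, t2]
    have hpos : ∀ t, t1 ≤ t → t ≤ t2 → F x t + 1 ≤ F a t := by
      intro t h1 h2
      rcases le_or_gt t t0 with h | h
      · rcases eq_or_lt_of_le h with rfl | h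
        · omega
        · have hne : ¬ (F a (t0 - 1 - ((t0 - t - 1).toNat : ℤ)) = F x (t0 - 1 - ((t0 - t - 1).toNat : ℤ))) := by
            have hlt : (t0 - t - 1).toNat < m1 := by omega
            simpa using Nat.find_min hP1 hlt
          have he : t0 - 1 - ((t0 - t - 1).toNat : ℤ) = t := by omega
          rw [he] at hne
          have := hmaj t
          omega
      · have hne : ¬ (F a (t0 + 1 + ((t - t0 - 1).toNat : ℤ)) = F x (t0 + 1 + ((t - t0 - 1).toNat : ℤ))) := by
          have hlt : (t - t0 - 1).toNat < m2 := by omega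
          simpa using Nat.find_min hP2 hlt
        have he : t0 + 1 + ((t - t0 - 1).toNat : ℤ) = t := by omega
        rw [he] at hne
        have := hmaj t
        omega
    -- existence of coordinates at t2+1 and t1-1
    have hcnt_eq : ∀ (y : Fin n → ℤ) (t : ℤ), F y t = F y (t + 1) + (cnt y (t + 1) : ℤ) := F_step
    have hexi : ∃ i, a i = t2 + 1 := by
      by_contra hno
      push_neg at hno
      have e1 : cnt a (t2 + 1) = cnt a (t2 + 2) := by
        unfold cnt
        congr 1
        apply Finset.filter_congr
        intro i _
        have := hno i
        constructor <;> intro h <;> omega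
      have s1 := F_step a t2; have s2 := F_step x t2
      have s3 := F_step a (t2 + 1); have s4 := F_step x (t2 + 1)
      have p1 := hpos t2 (by omega) (by omega)
      have p2 := hmaj (t2 + 2)
      have mono := cnt_mono x (by omega : (t2 + 1 : ℤ) ≤ t2 + 2)
      have e21 : (t2 + 1) + 1 = t2 + 2 := by ring
      rw [e21] at s3 s4
      omega
    have hexj : ∃ j, a j = t1 - 1 := by
      by_contra hno
      push_neg at hno
      have e1 : cnt a (t1 - 1) = cnt a t1 := by
        unfold cnt
        congr 1
        apply Finset.filter_congr
        intro i _
        have := hno i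
        constructor <;> intro h <;> omega
      have s1 := F_step a (t1 - 1); have s2 := F_step x (t1 - 1)
      have s3 := F_step a (t1 - 2); have s4 := F_step x (t1 - 2)
      have p1 := hpos t1 (by omega) (by omega)
      have p2 := hmaj (t1 - 2)
      have mono := cnt_mono x (by omega : (t1 - 1 : ℤ) ≤ t1)
      have e11 : t1 - 1 + 1 = t1 := by ring
      have e12 : t1 - 2 + 1 = t1 - 1 := by ring
      rw [e11] at s1 s2
      rw [e12] at s3 s4
      omega
    obtain ⟨i, hai⟩ := hexi
    obtain ⟨j, haj⟩ := hexj
    have hij : i ≠ j := by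
      intro h
      rw [h, haj] at hai
      omega
    -- the transferred vector
    set a' : Fin n → ℤ := fun k => if k = i then a i - 1 else if k = j then a j + 1 else a k with ha'
    have ha'i : a' i = a i - 1 := by simp [ha']
    have ha'j : a' j = a j + 1 := by simp [ha', hij.symm]
    have ha'k : ∀ k, k ≠ i → k ≠ j → a' k = a k := by
      intro k h1 h2; simp [ha', h1, h2]
    -- pointwise decomposition helper
    have hsplit : ∀ (f : ℤ → ℤ), ∑ k, f (a' k) =
        (∑ k, f (a k)) + (f (a i - 1) - f (a i)) + (f (a j + 1) - f (a j)) := by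
      intro f
      have hpt : ∀ k, f (a' k) = f (a k) + (if k = i then f (a i - 1) - f (a i) else 0)
          + (if k = j then f (a j + 1) - f (a j) else 0) := by
        intro k
        by_cases h1 : k = i
        · subst h1
          rw [if_pos rfl, if_neg hij, ha'i]
          ring
        · by_cases h2 : k = j
          · subst h2
            rw [if_neg h1, if_pos rfl, ha'j]
            ring
          · rw [if_neg h1, if_neg h2, ha'k k h1 h2]
            ring
      rw [Finset.sum_congr rfl fun k _ => hpt k, Finset.sum_add_distrib, Finset.sum_add_distrib,
        Finset.sum_ite_eq' Finset.univ i, Finset.sum_ite_eq' Finset.univ j]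
      simp
    -- new sum
    have hsum' : ∑ k, x k = ∑ k, a' k := by
      have := hsplit id
      simp only [id] at this
      rw [this]
      omega
    -- new F
    have hF' : ∀ t, F a' t = F a t + (((a i - 1 - t).toNat : ℤ) - ((a i - t).toNat : ℤ))
        + (((a j + 1 - t).toNat : ℤ) - ((a j - t).toNat : ℤ)) := by
      intro t
      have := hsplit (fun z => ((z - t).toNat : ℤ))
      exact this
    have hmaj' : ∀ t, F x t ≤ F a' t := by
      intro t
      rw [hF' t, hai, haj]
      rcases le_or_gt t1 t with h1 | h1
      · rcases le_or_gt t t2 with h2 | h2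
        · have := hpos t h1 h2
          omega
        · have := hmaj t
          omega
      · have := hmaj t
        omega
    -- measure decrease
    have hmeas : ∑ k, (a' k)^2 + 2 ≤ ∑ k, (a k)^2 := by
      have := hsplit (fun z => z^2)
      rw [this, hai, haj]
      nlinarith [ht12.1, ht12.2]
    have hnn' : 0 ≤ ∑ k, (a' k)^2 := Finset.sum_nonneg fun k _ => sq_nonneg _
    have hnn : 0 ≤ ∑ k, (a k)^2 := Finset.sum_nonneg fun k _ => sq_nonneg _
    have hlt : (∑ k, (a' k)^2).toNat < N := by
      have h1 : (∑ k, (a' k)^2) < (∑ k, (a k)^2) := by linarith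
      have h2 : (∑ k, (a' k)^2).toNat < (∑ k, (a k)^2).toNat :=
        (Int.toNat_lt_toNat (by linarith)).2 h1
      omega
    have hx' := ih _ hlt a' x le_rfl hsum' hmaj'
    -- orbit of a' is inside the hull of orbit of a
    have hvert : orb a' ⊆ convexHull ℝ (orb a) := by
      rintro y ⟨σ, rfl⟩
      have hd2' : (2 : ℤ) ≤ a i - a j := by
        rw [hai, haj]; omega
      have hd2 : (2 : ℝ) ≤ (a i : ℝ) - (a j : ℝ) := by exact_mod_cast hd2' 
      have hdne : (a i : ℝ) - (a j : ℝ) ≠ 0 := by linarith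
      set lam : ℝ := 1 / ((a i : ℝ) - (a j : ℝ)) with hlam
      have hlam0 : 0 < lam := by positivity
      have hlam1 : lam ≤ 1/2 := by
        rw [hlam]
        rw [div_le_div_iff₀ (by linarith) (by norm_num)]
        linarith
      have hkey : lam * ((a i : ℝ) - (a j : ℝ)) = 1 := by
        rw [hlam]; field_simp
      have hcomb : (fun k => (a' (σ k) : ℝ)) =
          (1 - lam) • (fun k => (a (σ k) : ℝ)) + lam • (fun k => (a ((σ.trans (Equiv.swap i j)) k) : ℝ)) := by
        funext k
        simp only [Pi.add_apply, Pi.smul_apply, smul_eq_mul, Equiv.trans_apply]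
        by_cases h1 : σ k = i
        · rw [h1, ha'i, Equiv.swap_apply_left]
          push_cast
          linear_combination hkey
        · by_cases h2 : σ k = j
          · rw [h2, ha'j, Equiv.swap_apply_right]
            push_cast
            linear_combination -hkey
          · rw [ha'k _ h1 h2, Equiv.swap_apply_of_ne_of_ne h1 h2]
            ring
      rw [hcomb]
      exact (convex_convexHull ℝ (orb a))
        (subset_convexHull ℝ (orb a) ⟨σ, rfl⟩)
        (subset_convexHull ℝ (orb a) ⟨σ.trans (Equiv.swap i j), rfl⟩)
        (by linarith) (le_of_lt hlam0) (by ring)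
    exact convexHull_min hvert (convex_convexHull ℝ (orb a)) hx'

end Perma2


namespace Perma

open Perma2

variable (n : ℕ)

def Xset : Set (Fin n → ℤ) :=
  {x | ∑ i, x i = gtot n ∧ ∀ S : Finset (Fin n), ∑ i ∈ S, x i ≤ topsum n S.card}

lemma orb_dI : Perma2.orb (dI n) = permutahedronVerts n := by
  unfold Perma2.orb permutahedronVerts
  ext y
  constructor <;> rintro ⟨σ, rfl⟩ <;> refine ⟨σ, funext fun i => ?_⟩ <;>
    simp [dI, dzv, deltaTuple]

/-- topsum k - k*t is at most F (dI n) t, for k ≤ n -/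
lemma topsum_le_F {k : ℕ} (hk : k ≤ n) (t : ℤ) :
    topsum n k - (k : ℤ) * t ≤ Perma2.F (dI n) t := by
  have hF : Perma2.F (dI n) t = ∑ i ∈ Finset.range n, (((dzv n i - t).toNat : ℤ)) :=
    Fin.sum_univ_eq_sum_range (fun j => (((dzv n j - t).toNat : ℤ))) n
  have h1 : topsum n k - (k : ℤ) * t = ∑ i ∈ Finset.range k, (dzv n i - t) := by
    rw [Finset.sum_sub_distrib, Finset.sum_const, Finset.card_range, nsmul_eq_mul, topsum]
  have h2 : ∑ i ∈ Finset.range k, (dzv n i - t) ≤ ∑ i ∈ Finset.range k, (((dzv n i - t).toNat : ℤ)) :=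
    Finset.sum_le_sum fun i _ => by omega
  have h3 : ∑ i ∈ Finset.range k, (((dzv n i - t).toNat : ℤ))
      ≤ ∑ i ∈ Finset.range n, (((dzv n i - t).toNat : ℤ)) :=
    Finset.sum_le_sum_of_subset_of_nonneg (Finset.range_subset_range.2 hk) fun i _ _ => by positivity
  omega

lemma latticePts_eq_Xset : latticePts n = Xset n := by
  ext x
  constructor
  · intro hx
    -- the convex region cut out by the linear constraints
    have hsub : convexHull ℝ (permutahedronVerts n) ⊆
        {y : Fin n → ℝ | (∑ i, y i = ((gtot n : ℤ) : ℝ)) ∧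
          ∀ S : Finset (Fin n), ∑ i ∈ S, y i ≤ ((topsum n S.card : ℤ) : ℝ)} := by
      apply convexHull_min
      · rintro y ⟨σ, rfl⟩
        constructor
        · have h1 : ∑ i, ((deltaTuple n (σ i) : ℤ) : ℝ) = ((∑ i, dI n (σ i) : ℤ) : ℝ) := by
            push_cast [dI, dzv, deltaTuple]
            rfl
          have h2 : ∑ i, dI n (σ i) = ∑ i, dI n i := Equiv.sum_comp σ (dI n)
          calc ∑ i, ((deltaTuple n (σ i) : ℕ) : ℝ) = ((∑ i, dI n (σ i) : ℤ) : ℝ) := by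
                push_cast [dI, dzv, deltaTuple]; rfl
            _ = ((gtot n : ℤ) : ℝ) := by rw [h2, sum_dI]
        · intro S
          have h2 : ∑ i ∈ S, dI n (σ i) = ∑ i ∈ S.image σ, dI n i :=
            (Finset.sum_image (fun a _ b _ h => σ.injective h)).symm
          have h3 : (S.image σ).card = S.card := Finset.card_image_of_injective S σ.injective
          have h4 : ∑ i ∈ S.image σ, dI n i ≤ topsum n S.card := by
            rw [← h3]; exact sum_subset_le n (S.image σ)
          calc ∑ i ∈ S, ((deltaTuple n (σ i) : ℕ) : ℝ) = ((∑ i ∈ S, dI n (σ i) : ℤ) : ℝ) := by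
                push_cast [dI, dzv, deltaTuple]; rfl
            _ ≤ ((topsum n S.card : ℤ) : ℝ) := by exact_mod_cast (h2 ▸ h4)
      · rintro y ⟨hy1, hy2⟩ z ⟨hz1, hz2⟩ α β hα hβ hαβ
        constructor
        · simp only [Pi.add_apply, Pi.smul_apply, smul_eq_mul]
          rw [Finset.sum_add_distrib, ← Finset.mul_sum, ← Finset.mul_sum, hy1, hz1]
          ring_nf
          linear_combination (((gtot n : ℤ)):ℝ) * hαβ
        · intro S
          simp only [Pi.add_apply, Pi.smul_apply, smul_eq_mul]
          rw [Finset.sum_add_distrib, ← Finset.mul_sum, ← Finset.mul_sum]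
          have h1 : α * ∑ i ∈ S, y i ≤ α * ((topsum n S.card : ℤ) : ℝ) :=
            mul_le_mul_of_nonneg_left (hy2 S) hα
          have h2 : β * ∑ i ∈ S, z i ≤ β * ((topsum n S.card : ℤ) : ℝ) :=
            mul_le_mul_of_nonneg_left (hz2 S) hβ
          have h3 : α * ((topsum n S.card : ℤ) : ℝ) + β * ((topsum n S.card : ℤ) : ℝ)
              = ((topsum n S.card : ℤ) : ℝ) := by rw [← add_mul, hαβ, one_mul]
          linarith
    obtain ⟨h1, h2⟩ := hsub hx
    constructor
    · have e : ∑ i, ((x i : ℤ) : ℝ) = ((∑ i, x i : ℤ) : ℝ) := by push_cast; rfl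
      rw [e] at h1
      exact_mod_cast h1
    · intro S
      have := h2 S
      have e : ∑ i ∈ S, ((x i : ℤ) : ℝ) = ((∑ i ∈ S, x i : ℤ) : ℝ) := by push_cast; rfl
      rw [e] at this
      exact_mod_cast this
  · rintro ⟨h1, h2⟩
    simp only [latticePts, Set.mem_setOf_eq]
    rw [← orb_dI]
    apply Perma2.rado_aux ((∑ i, (dI n i)^2).toNat) (dI n) x le_rfl
    · rw [h1, sum_dI]
    · intro t
      -- F x t = ∑ over S_t of (x i - t) ≤ topsum |S_t| - |S_t| * t ≤ F δ t
      set S : Finset (Fin n) := Finset.univ.filter (fun i => t + 1 ≤ x i) with hS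
      have e1 : Perma2.F x t = ∑ i ∈ S, (x i - t) := by
        rw [Perma2.F, ← Finset.sum_filter_add_sum_filter_not Finset.univ (fun i => t + 1 ≤ x i)]
        have ha : ∑ i ∈ Finset.univ.filter (fun i => ¬ (t + 1 ≤ x i)), (((x i - t).toNat : ℤ)) = 0 :=
          Finset.sum_eq_zero fun i hi => by
            simp only [Finset.mem_filter] at hi
            omega
        rw [ha, add_zero]
        exact Finset.sum_congr rfl fun i hi => by
          simp only [hS, Finset.mem_filter] at hi
          omega
      have e2 : ∑ i ∈ S, (x i - t) = ∑ i ∈ S, x i - (S.card : ℤ) * t := by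
        rw [Finset.sum_sub_distrib, Finset.sum_const, nsmul_eq_mul]
      have e3 : ∑ i ∈ S, x i ≤ topsum n S.card := h2 S
      have e4 : topsum n S.card - (S.card : ℤ) * t ≤ Perma2.F (dI n) t :=
        topsum_le_F n (by simpa using Finset.card_le_card (Finset.subset_univ S)) t
      omega

end Perma

namespace Perma

variable {n : ℕ}

lemma topsum_zero : topsum n 0 = 0 := by simp [topsum]

lemma topsum_n : topsum n n = gtot n := rfl

lemma Xset_bounds (hn : 2 ≤ n) {x : Fin n → ℤ} (hx : x ∈ Xset n) (i : Fin n) :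
    0 ≤ x i ∧ x i ≤ (n : ℤ) - 2 := by
  obtain ⟨h1, h2⟩ := hx
  constructor
  · have hT := h2 (Finset.univ.erase i)
    have hcard : (Finset.univ.erase i).card = n - 1 := by
      rw [Finset.card_erase_of_mem (Finset.mem_univ i), Finset.card_univ, Fintype.card_fin]
    have hsum : x i + ∑ k ∈ Finset.univ.erase i, x k = gtot n := by
      rw [Finset.add_sum_erase _ _ (Finset.mem_univ i)]
      exact h1
    rw [hcard, ← gtot_eq] at hT
    omega
  · have hT := h2 {i}
    rw [Finset.sum_singleton, Finset.card_singleton, topsum_one n hn] at hT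
    exact hT

lemma unique_shift (hn : 2 ≤ n) {x y : Fin n → ℤ} (hx : x ∈ Xset n) (hy : y ∈ Xset n)
    (c : ZMod n) (h : ∀ i, (x i : ZMod n) = (y i : ZMod n) + c) : x = y := by
  haveI : NeZero n := ⟨by omega⟩
  set cz : ℤ := (c.val : ℤ) with hcz
  have hcz0 : 0 ≤ cz := by positivity
  have hczn : cz < n := by
    have := ZMod.val_lt c
    omega
  have hdvd : ∀ i, (n : ℤ) ∣ (x i - y i - cz) := by
    intro i
    rw [← ZMod.intCast_zmod_eq_zero_iff_dvd]
    push_cast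
    rw [h i]
    have : ((c.val : ℤ) : ZMod n) = c := by
      push_cast
      rw [ZMod.natCast_val, ZMod.cast_id]
    rw [this]
    ring
  have hcase : ∀ i, x i - y i = cz ∨ x i - y i = cz - n := by
    intro i
    obtain ⟨hx0, hx1⟩ := Xset_bounds hn hx i
    obtain ⟨hy0, hy1⟩ := Xset_bounds hn hy i
    obtain ⟨k, hk⟩ := hdvd i
    have hn2 : (2 : ℤ) ≤ n := by exact_mod_cast hn
    -- x i - y i - cz = n * k with range bounds
    have : k = 0 ∨ k = -1 := by
      rcases le_or_gt k (-2) with h | h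
      · nlinarith
      · rcases le_or_gt 1 k with h' | h'
        · nlinarith
        · omega
    rcases this with rfl | rfl <;> omega
  set B : Finset (Fin n) := Finset.univ.filter (fun i => x i - y i = cz - n) with hB
  have hsum0 : ∑ i, (x i - y i) = 0 := by
    rw [Finset.sum_sub_distrib, hx.1, hy.1, sub_self]
  have hsplit : ∑ i, (x i - y i) = (B.card : ℤ) * (cz - n) + ((n : ℤ) - B.card) * cz := by
    rw [← Finset.sum_filter_add_sum_filter_not Finset.univ (fun i => x i - y i = cz - n)]
    have e1 : ∑ i ∈ Finset.univ.filter (fun i => x i - y i = cz - n), (x i - y i) =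
        (B.card : ℤ) * (cz - n) := by
      rw [Finset.sum_congr rfl (fun i hi => (Finset.mem_filter.1 hi).2), Finset.sum_const,
        nsmul_eq_mul, hB]
    have e2 : ∑ i ∈ Finset.univ.filter (fun i => ¬(x i - y i = cz - n)), (x i - y i) =
        ((Finset.univ.filter (fun i => ¬(x i - y i = cz - n))).card : ℤ) * cz := by
      rw [Finset.sum_congr rfl (fun i hi => by
          have h2 := (Finset.mem_filter.1 hi).2
          rcases hcase i with h | h
          · exact h
          · exact absurd h h2), Finset.sum_const, nsmul_eq_mul]
    rw [e1, e2]
    have e3 := Finset.card_filter_add_card_filter_not (s := Finset.univ)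
      (p := fun i => x i - y i = cz - n)
    rw [Finset.card_univ, Fintype.card_fin] at e3
    rw [← hB] at e3
    have e4 : ((Finset.univ.filter (fun i => ¬(x i - y i = cz - n))).card : ℤ)
        = (n : ℤ) - B.card := by omega
    rw [e4]
  have hBc : (B.card : ℤ) = cz := by
    have hnz : (n : ℤ) ≠ 0 := by
      have : (2:ℤ) ≤ n := by exact_mod_cast hn
      omega
    have h0 : (n : ℤ) * (cz - B.card) = 0 := by linarith [hsplit, hsum0]
    rcases mul_eq_zero.1 h0 with h | h
    · exact absurd h hnz
    · omega
  rcases eq_or_lt_of_le hcz0 with hc0 | hc1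
  · -- cz = 0 : all differences are 0
    funext i
    rcases hcase i with h | h
    · omega
    · obtain ⟨hx0, hx1⟩ := Xset_bounds hn hx i
      obtain ⟨hy0, hy1⟩ := Xset_bounds hn hy i
      have hn2 : (2 : ℤ) ≤ n := by exact_mod_cast hn
      omega
  · -- 1 ≤ cz ≤ n-1 : contradiction
    exfalso
    have hk1 : 1 ≤ B.card := by omega
    have hkn : B.card ≤ n - 1 := by
      have : (B.card : ℤ) < n := by omega
      omega
    -- upper bound on ∑_B y
    have hup : ∑ i ∈ B, y i ≤ topsum n B.card := hy.2 B
    -- lower bound on ∑_B x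
    have hlow : gtot n - topsum n (n - B.card) ≤ ∑ i ∈ B, x i := by
      have h1 : ∑ i ∈ Bᶜ, x i ≤ topsum n (Bᶜ.card) := hx.2 Bᶜ
      have h2 : ∑ i ∈ B, x i + ∑ i ∈ Bᶜ, x i = gtot n := by
        rw [Finset.sum_add_sum_compl]
        exact hx.1
      have h3 : Bᶜ.card = n - B.card := by
        rw [Finset.card_compl, Fintype.card_fin]
      rw [h3] at h1
      omega
    -- relation between the two sums
    have hrel : ∑ i ∈ B, y i = ∑ i ∈ B, x i - (B.card : ℤ) * (cz - n) := by
      have : ∑ i ∈ B, (x i - y i) = (B.card : ℤ) * (cz - n) := by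
        rw [Finset.sum_congr rfl (fun i hi => (Finset.mem_filter.1 hi).2), Finset.sum_const,
          nsmul_eq_mul]
      rw [Finset.sum_sub_distrib] at this
      omega
    -- closed forms
    have h2k := topsum_two_mul n (k := B.card) hkn
    have h2nk := topsum_two_mul n (k := n - B.card) (by omega)
    have hg := gtot_two_mul n (by omega)
    have hcast : ((n - B.card : ℕ) : ℤ) = (n : ℤ) - B.card := by
      have : B.card ≤ n := by omega
      omega
    rw [hcast] at h2nk
    set K : ℤ := (B.card : ℤ) with hK
    set N : ℤ := (n : ℤ) with hN
    -- . e : identity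
    have hrel2 : ∑ i ∈ B, y i = ∑ i ∈ B, x i - K * (K - N) := by
      rw [hrel, ← hBc]
    have e : 2 * topsum n B.card - (2 * gtot n - 2 * topsum n (n - B.card) + 2 * K * (N - K))
        = -2 := by linear_combination h2k + h2nk - hg
    linarith [hup, hlow, hrel2, e]

end Perma

namespace Perma

variable {n : ℕ}

lemma exists_rep (hn : 2 ≤ n) (v : Fin n → ZMod n)
    (hv : ∑ i, v i = ((gtot n : ℤ) : ZMod n)) :
    ∃ x ∈ Xset n, ∃ c : ZMod n, ∀ i, ((x i : ZMod n) + c = v i) := by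
  classical
  haveI : NeZero n := ⟨by omega⟩
  have hvz : ∀ i, (((v i).val : ℤ) : ZMod n) = v i := by
    intro i
    push_cast
    rw [ZMod.natCast_val, ZMod.cast_id]
  set P : ℕ → Prop := fun m => ∃ w : Fin n → ℤ, ∃ c : ZMod n, (∑ i, w i = gtot n) ∧
    (∀ i, ((w i : ZMod n) + c = v i)) ∧ ((∑ i, (w i)^2).toNat = m) with hP
  have hPex : ∃ m, P m := by
    set u : Fin n → ℤ := fun i => ((v i).val : ℤ) with hu
    set A : ℤ := (∑ i, u i) - gtot n with hA
    have hAz : ((A : ℤ) : ZMod n) = 0 := by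
      rw [hA]
      push_cast
      have e1 : ∑ i, (((u i : ℤ)) : ZMod n) = ∑ i, v i :=
        Finset.sum_congr rfl fun i _ => hvz i
      push_cast at e1
      rw [e1, hv]
      ring
    have hi0 : (0 : ℕ) < n := by omega
    set i0 : Fin n := ⟨0, hi0⟩ with hi0'
    have hui : ∀ i, ((u i : ℤ) : ZMod n) = v i := by
      intro i
      simp only [hu]
      exact hvz i
    set w0 : Fin n → ℤ := fun i => u i + (if i = i0 then -A else 0) with hw0
    refine ⟨(∑ i, (w0 i)^2).toNat, w0, 0, ?_, ?_, rfl⟩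
    · rw [hw0]
      rw [Finset.sum_add_distrib, Finset.sum_ite_eq' Finset.univ i0 (fun _ => -A)]
      simp only [Finset.mem_univ, if_true]
      rw [hA]
      ring
    · intro i
      rw [hw0]
      simp only
      by_cases h : i = i0
      · rw [if_pos h]
        push_cast
        rw [hAz, hui i]
        ring
      · rw [if_neg h]
        push_cast
        rw [hui i]
        ring
  set m0 := Nat.find hPex with hm0
  obtain ⟨w, c, h1, h2, h3⟩ := Nat.find_spec hPex
  rw [← hm0] at h3
  have hXw : ∀ S : Finset (Fin n), ∑ i ∈ S, w i ≤ topsum n S.card := by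
    by_contra hcon
    push_neg at hcon
    obtain ⟨S, hS⟩ := hcon
    set k := S.card with hk
    have hk0 : 0 < k := by
      rcases Nat.eq_zero_or_pos k with h | h
      · exfalso
        have hs : S = ∅ := Finset.card_eq_zero.1 (by omega)
        have hsum0 : ∑ i ∈ S, w i = 0 := by rw [hs]; simp
        have ht : topsum n k = 0 := by rw [h]; exact topsum_zero
        omega
      · exact h
    have hkn : k < n := by
      rcases lt_or_ge k n with h | h
      · exact h
      · exfalso
        have hcard : S.card = Fintype.card (Fin n) := by
          rw [Fintype.card_fin]
          have := Finset.card_le_card (Finset.subset_univ S)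
          rw [Finset.card_univ, Fintype.card_fin] at this
          omega
        have hsuniv : S = Finset.univ := Finset.eq_univ_of_card S hcard
        have hsum0 : ∑ i ∈ S, w i = gtot n := by rw [hsuniv]; exact h1
        have hc : k = n := by rw [hk, hsuniv, Finset.card_univ, Fintype.card_fin]
        have ht : topsum n k = gtot n := by rw [hc]; exact topsum_n
        omega
    set zn : ℤ := (n : ℤ) with hzn
    set zk : ℤ := (k : ℤ) with hzk
    set w' : Fin n → ℤ := fun i => if i ∈ S then w i - zn + zk else w i + zk with hw'
    have eS : ∀ i ∈ S, w' i = w i + (zk - zn) := by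
      intro i hi
      rw [hw']
      simp only [if_pos hi]
      ring
    have eC : ∀ i ∈ Sᶜ, w' i = w i + zk := by
      intro i hi
      rw [hw']
      simp only [if_neg (Finset.mem_compl.1 hi)]
    have hcardC : ((Sᶜ).card : ℤ) = zn - zk := by
      rw [Finset.card_compl, Fintype.card_fin]
      push_cast [hzn, hzk, hk]
      omega
    -- sums split
    have hsplitS : ∀ (f : ℤ → ℤ), ∑ i, f (w' i) =
        ∑ i ∈ S, f (w i + (zk - zn)) + ∑ i ∈ Sᶜ, f (w i + zk) := by
      intro f
      rw [← Finset.sum_add_sum_compl S (fun i => f (w' i))]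
      congr 1
      · exact Finset.sum_congr rfl fun i hi => by rw [eS i hi]
      · exact Finset.sum_congr rfl fun i hi => by rw [eC i hi]
    have hsumS : ∑ i ∈ S, w i + ∑ i ∈ Sᶜ, w i = gtot n := by
      rw [Finset.sum_add_sum_compl]
      exact h1
    have hsum' : ∑ i, w' i = gtot n := by
      have hid := hsplitS id
      simp only [id_eq] at hid
      rw [hid]
      rw [Finset.sum_add_distrib, Finset.sum_add_distrib, Finset.sum_const, Finset.sum_const,
        nsmul_eq_mul, nsmul_eq_mul]
      have e1 : ((Sᶜ).card : ℤ) = zn - zk := hcardC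
      rw [e1, ← hk]
      have : (S.card : ℤ) = zk := by rw [hzk, hk]
      rw [this]
      have := hsumS
      linarith [this]
    have hres' : ∀ i, ((w' i : ZMod n) + (c - (k : ZMod n)) = v i) := by
      intro i
      have hzero : ((zn : ℤ) : ZMod n) = 0 := by
        rw [hzn]
        push_cast
        exact ZMod.natCast_self n
      by_cases h : i ∈ S
      · rw [hw']
        simp only [if_pos h]
        push_cast
        push_cast at hzero
        rw [hzero]
        have := h2 i
        rw [hzk]
        push_cast
        linear_combination this
      · rw [hw']
        simp only [if_neg h]
        push_cast
        have := h2 i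
        rw [hzk]
        push_cast
        linear_combination this
    -- measure decrease
    have hA1 : topsum n k + 1 ≤ ∑ i ∈ S, w i := by omega
    have expand : ∀ (d : ℤ) (T : Finset (Fin n)), ∑ i ∈ T, (w i + d)^2 =
        ∑ i ∈ T, (w i)^2 + 2 * d * (∑ i ∈ T, w i) + (T.card : ℤ) * d^2 := by
      intro d T
      have e1 : ∀ i, (w i + d)^2 = (w i)^2 + (2 * d) * (w i) + d^2 := fun i => by ring
      rw [Finset.sum_congr rfl fun i _ => e1 i, Finset.sum_add_distrib, Finset.sum_add_distrib,
        ← Finset.mul_sum, Finset.sum_const, nsmul_eq_mul]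
    have hQ : ∑ i, (w' i)^2 ≤ ∑ i, (w i)^2 - 2 := by
      have e0 := hsplitS (fun z => z^2)
      rw [expand (zk - zn) S, expand zk Sᶜ, hcardC, ← hk] at e0
      have hsq : ∑ i ∈ S, (w i)^2 + ∑ i ∈ Sᶜ, (w i)^2 = ∑ i, (w i)^2 := by
        rw [Finset.sum_add_sum_compl]
      have hcompl : ∑ i ∈ Sᶜ, w i = gtot n - ∑ i ∈ S, w i := by omega
      have hSk : (S.card : ℤ) = zk := by rw [hzk, hk]
      rw [hSk, hcompl] at e0
      have h2k := topsum_two_mul n (k := k) (by omega)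
      have hg := gtot_two_mul n (by omega)
      rw [← hzk] at h2k
      rw [← hzn] at h2k hg
      have key : 2 * zn * (topsum n k + 1) ≤ 2 * zn * (∑ i ∈ S, w i) := by
        apply mul_le_mul_of_nonneg_left hA1
        rw [hzn]
        positivity
      have key2 : zn * (2 * topsum n k) = zn * (zk * (2 * zn - 3 - zk)) := by rw [h2k]
      have keyg : zk * (2 * gtot n) = zk * ((zn - 1) * (zn - 2)) := by rw [hg]
      have hkb : zk ≤ zn - 1 := by
        rw [hzk, hzn]
        omega
      nlinarith [e0, key, key2, keyg, hkb, hsq]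
    have hnn' : 0 ≤ ∑ i, (w' i)^2 := Finset.sum_nonneg fun i _ => sq_nonneg _
    have hpos : (0:ℤ) < ∑ i, (w i)^2 := by linarith
    have hlt : (∑ i, (w' i)^2).toNat < m0 := by
      rw [← h3]
      exact (Int.toNat_lt_toNat hpos).2 (by linarith)
    exact Nat.find_min hPex hlt ⟨w', c - (k : ZMod n), hsum', hres', rfl⟩
  exact ⟨w, ⟨h1, hXw⟩, c, h2⟩

end Perma

namespace Perma

variable {n : ℕ}

def Vset (n : ℕ) : Set (Fin n → ZMod n) :=
  {v | ∑ i, v i = ((gtot n : ℤ) : ZMod n)}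

lemma card_Vset_mul (hn : 2 ≤ n) : Nat.card (Vset n) * n = n ^ n := by
  haveI : NeZero n := ⟨by omega⟩
  have hi0 : (0 : ℕ) < n := by omega
  set i0 : Fin n := ⟨0, hi0⟩ with hi0'
  -- equivalence (Fin n → ZMod n) ≃ Vset n × ZMod n
  have hmem : ∀ (f : Fin n → ZMod n),
      (fun i => if i = i0 then f i - ((∑ j, f j) - ((gtot n : ℤ) : ZMod n)) else f i) ∈ Vset n := by
    intro f
    show (∑ i, _) = _
    have e : ∀ i : Fin n, (if i = i0 then f i - ((∑ j, f j) - ((gtot n : ℤ) : ZMod n)) else f i)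
        = f i + (if i = i0 then -((∑ j, f j) - ((gtot n : ℤ) : ZMod n)) else 0) := by
      intro i
      split_ifs <;> ring
    rw [Finset.sum_congr rfl fun i _ => e i, Finset.sum_add_distrib,
      Finset.sum_ite_eq' Finset.univ i0]
    simp only [Finset.mem_univ, if_true]
    ring
  set E : (Fin n → ZMod n) → (Vset n × ZMod n) := fun f =>
    (⟨fun i => if i = i0 then f i - ((∑ j, f j) - ((gtot n : ℤ) : ZMod n)) else f i, hmem f⟩,
      (∑ j, f j) - ((gtot n : ℤ) : ZMod n)) with hE
  set Einv : (Vset n × ZMod n) → (Fin n → ZMod n) := fun p =>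
    fun i => if i = i0 then (p.1 : Fin n → ZMod n) i + p.2 else (p.1 : Fin n → ZMod n) i
    with hEinv
  have hleft : Function.LeftInverse Einv E := by
    intro f
    funext i
    simp only [hE, hEinv]
    split_ifs with h
    · ring
    · rfl
  have hright : Function.RightInverse Einv E := by
    rintro ⟨⟨g, hg⟩, s⟩
    have hsum : ∑ j, (fun i => if i = i0 then g i + s else g i) j
        = ((gtot n : ℤ) : ZMod n) + s := by
      have e : ∀ i : Fin n, (if i = i0 then g i + s else g i)
          = g i + (if i = i0 then s else 0) := by
        intro i; split_ifs <;> ring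
      rw [Finset.sum_congr rfl fun i _ => e i, Finset.sum_add_distrib,
        Finset.sum_ite_eq' Finset.univ i0]
      simp only [Finset.mem_univ, if_true]
      rw [hg]
    simp only [hE, hEinv]
    ext x
    · simp only
      rw [hsum]
      split_ifs with h
      · ring_nf
      · rfl
    · simp only
      rw [hsum]
      ring
  have hequiv : Nat.card (Fin n → ZMod n) = Nat.card (Vset n × ZMod n) :=
    Nat.card_congr ⟨E, Einv, hleft, hright⟩
  rw [Nat.card_prod, Nat.card_zmod] at hequiv
  have hfun : Nat.card (Fin n → ZMod n) = n ^ n := by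
    rw [Nat.card_pi]
    simp [Nat.card_zmod]
  omega

lemma card_Xset_mul (hn : 2 ≤ n) : Nat.card (Xset n) * n = Nat.card (Vset n) := by
  haveI : NeZero n := ⟨by omega⟩
  have hi0 : (0 : ℕ) < n := by omega
  set i0 : Fin n := ⟨0, hi0⟩ with hi0'
  set e : (Xset n × ZMod n) → Vset n := fun p =>
    ⟨fun i => ((p.1 : Fin n → ℤ) i : ZMod n) + p.2, by
      show (∑ i, _) = _
      rw [Finset.sum_add_distrib, Finset.sum_const, Finset.card_univ, Fintype.card_fin]
      have h1 : ∑ i, (((p.1 : Fin n → ℤ) i : ZMod n)) = ((gtot n : ℤ) : ZMod n) := by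
        have := p.1.2.1
        push_cast [← this]
        rfl
      rw [h1, nsmul_eq_mul]
      have : ((n : ℕ) : ZMod n) = 0 := ZMod.natCast_self n
      rw [this]
      ring⟩ with he
  have hbij : Function.Bijective e := by
    constructor
    · rintro ⟨⟨x, hx⟩, cx⟩ ⟨⟨y, hy⟩, cy⟩ hxy
      have hxy' : ∀ i, (x i : ZMod n) + cx = (y i : ZMod n) + cy := by
        intro i
        have := congrArg (fun (v : Vset n) => (v : Fin n → ZMod n) i) hxy
        simpa [he] using this
      have hx_eq_y : x = y := by
        apply unique_shift hn hx hy (cy - cx)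
        intro i
        have := hxy' i
        linear_combination this
      subst hx_eq_y
      have hc : cx = cy := by
        have := hxy' i0
        exact add_left_cancel this
      simp [hc]
    · rintro ⟨v, hv⟩
      obtain ⟨x, hx, c, hc⟩ := exists_rep hn v hv
      exact ⟨(⟨x, hx⟩, c), by
        simp only [he]
        exact Subtype.ext (funext fun i => hc i)⟩
  have := Nat.card_congr (Equiv.ofBijective e hbij)
  rw [Nat.card_prod, Nat.card_zmod] at this
  exact this

theorem card_latticePts' (hn : 2 ≤ n) : Nat.card (latticePts n) = n ^ (n - 2) := by
  have h1 : Nat.card (latticePts n) = Nat.card (Xset n) := by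
    rw [latticePts_eq_Xset]
  have h2 := card_Xset_mul (n := n) hn
  have h3 := card_Vset_mul (n := n) hn
  have h4 : n ^ n = n ^ (n - 2) * n * n := by
    rw [← pow_succ, ← pow_succ]
    congr 1
    omega
  have h5 : Nat.card (Xset n) * n * n = n ^ (n - 2) * n * n := by
    rw [h2, h3, h4]
  have hn0 : 0 < n := by omega
  have h6 := Nat.eq_of_mul_eq_mul_right hn0 h5
  have h7 := Nat.eq_of_mul_eq_mul_right hn0 h6
  rw [h1, h7]

end Perma


/-- The number of lattice points of the permutahedron `P_{δ_n}` equals `n^{n-2}`. -/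
theorem card_latticePts (n : ℕ) (hn : 2 ≤ n) :
    Nat.card (latticePts n) = n ^ (n - 2) := by
  exact Perma.card_latticePts' hn
end

section
/- Let n ≥ 2 and let λ = (λ_1 ≥ ⋯ ≥ λ_n) be a weakly decreasing tuple of nonnegative integers with λ_1 + ⋯ + λ_n = (n−1)(n−2)/2 that is dominated by δ_n. Then for every j with 1 ≤ j ≤ n−1, the tuple sort(shift^j(λ)) does not satisfy both of these conditions; that is, either its coordinate sum is not (n−1)(n−2)/2 or it is not dominated by δ_n. -/
/-- A tuple `μ` of length `n` is dominated by `δ_n` if all its partial sums are bounded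
by the corresponding partial sums of `δ_n`. -/
def dominatedByDelta (n : ℕ) (l : Fin n → ℕ) : Prop :=
  ∀ k : ℕ, k ≤ n →
    ∑ i ∈ Finset.univ.filter (fun i : Fin n => (i : ℕ) < k), l i ≤
      ∑ i ∈ Finset.univ.filter (fun i : Fin n => (i : ℕ) < k), deltaTuple n i

/-- The shift map: add `1` to every coordinate and reduce modulo `n` so as to lie in
`{0,…,n-1}`. -/
def shiftMod (n : ℕ) {N : ℕ} (x : Fin N → ℕ) : Fin N → ℕ :=
  fun i => (x i + 1) % n

open Finset

lemma sum_filter_lt_eq_range (n k : ℕ) (hk : k ≤ n) (g : ℕ → ℕ) :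
    ∑ i ∈ univ.filter (fun i : Fin n => (i : ℕ) < k), g (i : ℕ)
      = ∑ t ∈ Finset.range k, g t := by
  calc ∑ i ∈ univ.filter (fun i : Fin n => (i : ℕ) < k), g (i : ℕ)
      = ∑ i : Fin n, (fun t => if t < k then g t else 0) (i : ℕ) := by
        rw [Finset.sum_filter]
    _ = ∑ t ∈ Finset.range n, (if t < k then g t else 0) :=
        Fin.sum_univ_eq_sum_range (fun t => if t < k then g t else 0) n
    _ = ∑ t ∈ Finset.range k, (if t < k then g t else 0) := by
        rw [← Finset.sum_subset (Finset.range_subset_range.mpr hk) (fun t ht hnt => by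
          simp only [Finset.mem_range] at ht hnt
          exact if_neg (by omega))]
    _ = ∑ t ∈ Finset.range k, g t :=
        Finset.sum_congr rfl fun t ht => if_pos (Finset.mem_range.mp ht)

lemma card_filter_lt_fin (n k : ℕ) (hk : k ≤ n) :
    (univ.filter (fun i : Fin n => (i : ℕ) < k)).card = k := by
  have h := sum_filter_lt_eq_range n k hk (fun _ => 1)
  simpa using h

lemma antitone_filter_eq {n : ℕ} (f : Fin n → ℕ) (hf : Antitone f) (c : ℕ) :
    univ.filter (fun i : Fin n => c ≤ f i)
      = univ.filter (fun i : Fin n => (i : ℕ) < (univ.filter (fun i : Fin n => c ≤ f i)).card) := by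
  ext i
  simp only [mem_filter, mem_univ, true_and]
  constructor
  · intro h
    have hsub : univ.filter (fun i' : Fin n => (i' : ℕ) < (i : ℕ) + 1)
        ⊆ univ.filter (fun i' : Fin n => c ≤ f i') := by
      intro i' hi'
      simp only [mem_filter, mem_univ, true_and] at hi' ⊢
      exact le_trans h (hf (Fin.le_def.mpr (by omega)))
    have hc := Finset.card_le_card hsub
    rw [card_filter_lt_fin n ((i : ℕ) + 1) (Nat.succ_le_of_lt i.isLt)] at hc
    omega
  · intro h
    by_contra hc
    have hsub : univ.filter (fun i' : Fin n => c ≤ f i')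
        ⊆ univ.filter (fun i' : Fin n => (i' : ℕ) < (i : ℕ)) := by
      intro i' hi'
      simp only [mem_filter, mem_univ, true_and] at hi' ⊢
      by_contra hlt
      exact hc (le_trans hi' (hf (Fin.le_def.mpr (by omega))))
    have h2 := Finset.card_le_card hsub
    rw [card_filter_lt_fin n (i : ℕ) (le_of_lt i.isLt)] at h2
    omega

lemma sum_filter_comp_equiv {n : ℕ} (e : Equiv.Perm (Fin n)) (f : Fin n → ℕ)
    (p : ℕ → Prop) [DecidablePred p] :
    ∑ i ∈ univ.filter (fun i => p (f (e i))), f (e i)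
      = ∑ i ∈ univ.filter (fun i => p (f i)), f i := by
  rw [Finset.sum_filter, Finset.sum_filter]
  exact Equiv.sum_comp e (fun i => if p (f i) then f i else 0)

lemma card_filter_comp_equiv {n : ℕ} (e : Equiv.Perm (Fin n)) (f : Fin n → ℕ)
    (p : ℕ → Prop) [DecidablePred p] :
    (univ.filter (fun i => p (f (e i)))).card = (univ.filter (fun i => p (f i))).card := by
  rw [Finset.card_filter, Finset.card_filter]
  exact Equiv.sum_comp e (fun i => if p (f i) then (1 : ℕ) else 0)

lemma shiftMod_iterate (n : ℕ) {N : ℕ} (l : Fin N → ℕ) (hl : ∀ i, l i < n) (j : ℕ) :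
    (shiftMod n)^[j] l = fun i => (l i + j) % n := by
  induction j with
  | zero => funext i; simp [Nat.mod_eq_of_lt (hl i)]
  | succ m ih =>
    rw [Function.iterate_succ_apply', ih]
    funext i
    simp only [shiftMod, Nat.mod_add_mod]
    ring_nf

lemma delta_psum (n : ℕ) (hn : 2 ≤ n) : ∀ k, k ≤ n - 1 →
    2 * ((∑ t ∈ Finset.range k, (n - 2 - t) : ℕ) : ℤ)
      = (k : ℤ) * (2 * n - 4) - (k : ℤ) * ((k : ℤ) - 1) := by
  intro k
  induction k with
  | zero => intro _; simp
  | succ m ih =>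
    intro hk
    have h1 := ih (by omega)
    rw [Finset.sum_range_succ]
    have h2 : ((n - 2 - m : ℕ) : ℤ) = (n : ℤ) - 2 - (m : ℤ) := by omega
    push_cast
    push_cast at h1
    rw [h2]
    linear_combination h1

/-- If `λ` is a weakly decreasing tuple of nonnegative integers with coordinate sum
`(n-1)(n-2)/2` dominated by `δ_n`, then for `1 ≤ j ≤ n-1` the tuple `sort(shiftʲ(λ))`
fails to have coordinate sum `(n-1)(n-2)/2` or fails to be dominated by `δ_n`. -/
theorem shift_not_dominated (n : ℕ) (hn : 2 ≤ n) (l : Fin n → ℕ)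
    (hdec : Antitone l) (hsum : ∑ i, l i = (n - 1) * (n - 2) / 2)
    (hdom : dominatedByDelta n l) :
    ∀ j : ℕ, 1 ≤ j → j ≤ n - 1 →
      ¬ (∑ i, sortDesc ((shiftMod n)^[j] l) i = (n - 1) * (n - 2) / 2 ∧
          dominatedByDelta n (sortDesc ((shiftMod n)^[j] l))) := by
  intro j hj1 hjn
  rintro ⟨hsum2, hdom2⟩
  -- every entry of l is at most n - 2
  have hln : ∀ i, l i ≤ n - 2 := by
    have h1 := hdom 1 (by omega)
    have hset : univ.filter (fun i : Fin n => (i : ℕ) < 1) = {(⟨0, by omega⟩ : Fin n)} := by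
      ext i
      simp only [mem_filter, mem_univ, true_and, Finset.mem_singleton, Fin.ext_iff]
      omega
    rw [hset, Finset.sum_singleton, Finset.sum_singleton] at h1
    intro i
    calc l i ≤ l ⟨0, by omega⟩ := hdec (Fin.le_def.mpr (by simp))
    _ ≤ n - 2 := by simpa [deltaTuple] using h1
  -- the shifted tuple
  set x : Fin n → ℕ := fun i => (l i + j) % n with hxdef
  have hiter : (shiftMod n)^[j] l = x :=
    shiftMod_iterate n l (fun i => by have := hln i; omega) j
  rw [hiter] at hsum2 hdom2
  -- sortDesc x as composition with a permutation
  set e : Equiv.Perm (Fin n) := (Fin.revPerm).trans (Tuple.sort x) with hedef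
  have hμ : ∀ i, sortDesc x i = x (e i) := fun i => rfl
  have hμanti : Antitone (sortDesc x) := by
    intro a b hab
    exact Tuple.monotone_sort x (Fin.rev_le_rev.mpr hab)
  -- total sums
  have hsumx : ∑ i, x i = (n - 1) * (n - 2) / 2 := by
    rw [← hsum2]
    exact (Equiv.sum_comp e x).symm
  have h2S : 2 * ((n - 1) * (n - 2) / 2) = (n - 1) * (n - 2) := by
    have hev : Even ((n - 2) * ((n - 2) + 1)) := Nat.even_mul_succ_self (n - 2)
    have heq : (n - 2) * ((n - 2) + 1) = (n - 1) * (n - 2) := by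
      rw [mul_comm]
      congr 1
      omega
    rw [heq] at hev
    exact Nat.mul_div_cancel' hev.two_dvd
  -- the wrap set
  set W : Finset (Fin n) := univ.filter (fun i => n ≤ l i + j) with hWdef
  have hsplit : ∀ i : Fin n, x i + n * (if n ≤ l i + j then 1 else 0) = l i + j := by
    intro i
    by_cases h : n ≤ l i + j
    · have hlt : l i + j - n < n := by have := hln i; omega
      simp only [hxdef, if_pos h, Nat.mod_eq_sub_mod h, Nat.mod_eq_of_lt hlt]
      omega
    · have hlt : l i + j < n := by omega
      simp only [hxdef, if_neg h, Nat.mod_eq_of_lt hlt]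
      omega
  have hsumsplit : ∑ i, x i + n * W.card = ∑ i, l i + n * j := by
    have htot := Finset.sum_congr rfl (fun i (_ : i ∈ univ) => hsplit i)
    rw [Finset.sum_add_distrib, ← Finset.mul_sum, Finset.sum_add_distrib] at htot
    simp only [Finset.sum_const, Finset.card_univ, Fintype.card_fin, smul_eq_mul,
      mul_one] at htot
    rw [hWdef, Finset.card_filter]
    omega
  have hWcard : W.card = j := by
    rw [hsumx, hsum] at hsumsplit
    have : n * W.card = n * j := by omega
    exact Nat.eq_of_mul_eq_mul_left (by omega) this
  -- W is the initial segment of length j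
  have hW : W = univ.filter (fun i : Fin n => (i : ℕ) < j) := by
    have := antitone_filter_eq (fun i => l i + j)
      (fun a b hab => Nat.add_le_add_right (hdec hab) j) n
    rw [← hWdef, hWcard] at this
    exact this
  have hwrap : ∀ i : Fin n, n ≤ l i + j ↔ (i : ℕ) < j := by
    intro i
    have := Finset.ext_iff.mp hW i
    simpa [hWdef] using this
  -- x i ≥ j iff i ≥ j
  have hxge : ∀ i : Fin n, j ≤ x i ↔ j ≤ (i : ℕ) := by
    intro i
    have hli := hln i
    by_cases h : n ≤ l i + j
    · have hi := (hwrap i).mp h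
      have hlt : l i + j - n < n := by omega
      have hx : x i = l i + j - n := by
        simp only [hxdef, Nat.mod_eq_sub_mod h, Nat.mod_eq_of_lt hlt]
      rw [hx]
      omega
    · have hi := (hwrap i).not.mp h
      have hlt : l i + j < n := by omega
      have hx : x i = l i + j := by
        simp only [hxdef, Nat.mod_eq_of_lt hlt]
      rw [hx]
      omega
  -- cardinality of the complement of the initial segment
  have hcardnot : (univ.filter (fun i : Fin n => ¬ ((i : ℕ) < j))).card = n - j := by
    have h3 := Finset.card_filter_add_card_filter_not
      (s := (univ : Finset (Fin n))) (fun i : Fin n => (i : ℕ) < j)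
    rw [card_filter_lt_fin n j (by omega)] at h3
    simp only [Finset.card_univ, Fintype.card_fin] at h3
    omega
  have h2 : univ.filter (fun i : Fin n => j ≤ x i)
      = univ.filter (fun i : Fin n => ¬ ((i : ℕ) < j)) := by
    apply Finset.filter_congr
    intro i _
    simp only [hxge i, not_lt, eq_iff_iff]
  -- the top part of sortDesc x
  have hScard : (univ.filter (fun i : Fin n => j ≤ sortDesc x i)).card = n - j := by
    have h1 : (univ.filter (fun i : Fin n => j ≤ sortDesc x i)).card
        = (univ.filter (fun i : Fin n => j ≤ x i)).card := by
      have := card_filter_comp_equiv e x (fun t => j ≤ t)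
      simpa [← hμ] using this
    rw [h1, h2, hcardnot]
  have hStop : univ.filter (fun i : Fin n => j ≤ sortDesc x i)
      = univ.filter (fun i : Fin n => (i : ℕ) < n - j) := by
    have := antitone_filter_eq (sortDesc x) hμanti j
    rw [hScard] at this
    exact this
  -- sum over the top part
  have hsumtop : ∑ i ∈ univ.filter (fun i : Fin n => (i : ℕ) < n - j), sortDesc x i
      = (∑ i ∈ univ.filter (fun i : Fin n => ¬ ((i : ℕ) < j)), l i) + (n - j) * j := by
    rw [← hStop]
    have h1 : ∑ i ∈ univ.filter (fun i : Fin n => j ≤ sortDesc x i), sortDesc x i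
        = ∑ i ∈ univ.filter (fun i : Fin n => j ≤ x i), x i := by
      have := sum_filter_comp_equiv e x (fun t => j ≤ t)
      simpa [← hμ] using this
    rw [h1, h2]
    have h3 : ∀ i ∈ univ.filter (fun i : Fin n => ¬ ((i : ℕ) < j)), x i = l i + j := by
      intro i hi
      simp only [mem_filter, mem_univ, true_and, not_lt] at hi
      have h4 : ¬ (n ≤ l i + j) := by
        rw [hwrap i]; omega
      have hlt : l i + j < n := by omega
      simp only [hxdef, Nat.mod_eq_of_lt hlt]
    rw [Finset.sum_congr rfl h3, Finset.sum_add_distrib, Finset.sum_const, smul_eq_mul,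
      hcardnot]
  -- the two domination inequalities
  set A := ∑ i ∈ univ.filter (fun i : Fin n => (i : ℕ) < j), l i with hAdef
  set B := ∑ i ∈ univ.filter (fun i : Fin n => ¬ ((i : ℕ) < j)), l i with hBdef
  have hAB : A + B = (n - 1) * (n - 2) / 2 := by
    rw [hAdef, hBdef, Finset.sum_filter_add_sum_filter_not, hsum]
  have hdomj := hdom j (by omega)
  have hdomnj := hdom2 (n - j) (by omega)
  rw [hsumtop] at hdomnj
  -- rewrite delta sums as range sums
  have hdelta : ∀ k : ℕ, k ≤ n →
      ∑ i ∈ univ.filter (fun i : Fin n => (i : ℕ) < k), deltaTuple n i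
        = ∑ t ∈ Finset.range k, (n - 2 - t) :=
    fun k hk => sum_filter_lt_eq_range n k hk (fun t => n - 2 - t)
  rw [hdelta j (by omega)] at hdomj
  rw [hdelta (n - j) (by omega)] at hdomnj
  -- pass to the integers and derive a contradiction
  have hD1 := delta_psum n hn j (by omega)
  have hD2 := delta_psum n hn (n - j) (by omega)
  have hcast : ((n - j : ℕ) : ℤ) = (n : ℤ) - (j : ℤ) := by omega
  rw [hcast] at hD2
  have hABd : 2 * (A + B) = (n - 1) * (n - 2) := by omega
  have hnn : ((n - 1 : ℕ) : ℤ) = (n : ℤ) - 1 := by omega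
  have hnn2 : ((n - 2 : ℕ) : ℤ) = (n : ℤ) - 2 := by omega
  have h1 : 2 * ((A : ℤ) + (B : ℤ)) = ((n : ℤ) - 1) * ((n : ℤ) - 2) := by
    have h := congrArg (fun t : ℕ => (t : ℤ)) hABd
    push_cast at h
    rw [hnn, hnn2] at h
    linarith
  have hle2 : 2 * (A : ℤ) ≤ (j : ℤ) * (2 * n - 4) - (j : ℤ) * ((j : ℤ) - 1) := by
    have h : (A : ℤ) ≤ ((∑ t ∈ Finset.range j, (n - 2 - t) : ℕ) : ℤ) := by
      exact_mod_cast hdomj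
    linarith
  have hle3 : 2 * ((B : ℤ) + ((n : ℤ) - (j : ℤ)) * (j : ℤ))
      ≤ ((n : ℤ) - j) * (2 * n - 4) - ((n : ℤ) - j) * (((n : ℤ) - j) - 1) := by
    have hc1 : ((B + (n - j) * j : ℕ) : ℤ) = (B : ℤ) + ((n : ℤ) - (j : ℤ)) * (j : ℤ) := by
      push_cast [hcast]
      ring
    have h : ((B + (n - j) * j : ℕ) : ℤ)
        ≤ ((∑ t ∈ Finset.range (n - j), (n - 2 - t) : ℕ) : ℤ) := by
      exact_mod_cast hdomnj
    rw [hc1] at h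
    linarith
  have hid : ((n : ℤ) - 1) * ((n : ℤ) - 2) + 2 * ((n : ℤ) - (j : ℤ)) * (j : ℤ)
      + (j : ℤ) * ((j : ℤ) - 1) + ((n : ℤ) - j) * (((n : ℤ) - j) - 1)
      = (j : ℤ) * (2 * n - 4) + ((n : ℤ) - j) * (2 * n - 4) + 2 := by ring
  linarith [h1, hle2, hle3, hid]
end
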